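/- arXiv:1412.8002 — 7 statements merged into one kernel-verified Lean document; each statement's English description precedes it below -/
import Mathlib

section
/- If G is a bipartite graph with parts X and Y, and L assigns to each vertex a finite list of colors (each of size at least 2) such that for every edge uv the lists L(u) and L(v) share at least two common colors, then G has a proper coloring f with f(v) ∈ L(v) for every vertex v. -/
/-- If G is a bipartite graph with parts X and Y, and L assigns each vertex a finite
list of at least 2 colors such that adjacent lists share at least two colors,
then G has a proper coloring chosen from the lists. -/
theorem stmt_0 {V : Type} [Fintype V] (G : SimpleGraph V) (X Y : Set V)
    (hcover : ∀ v, v ∈ X ∨ v ∈ Y) (hdisj : Disjoint X Y)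
    (hbip : ∀ u v, G.Adj u v → (u ∈ X ∧ v ∈ Y) ∨ (u ∈ Y ∧ v ∈ X))
    (L : V → Finset ℕ) (hL : ∀ v, 2 ≤ (L v).card)
    (hshare : ∀ u v, G.Adj u v → 2 ≤ (L u ∩ L v).card) :
    ∃ f : V → ℕ, (∀ v, f v ∈ L v) ∧ ∀ u v, G.Adj u v → f u ≠ f v := by
  classical
  have hne : ∀ v, (L v).Nonempty := fun v =>
    Finset.card_pos.mp (by have := hL v; omega)
  refine ⟨fun v => if v ∈ X then (L v).min' (hne v) else (L v).max' (hne v), ?_, ?_⟩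
  · intro v
    by_cases h : v ∈ X
    · simp [h, Finset.min'_mem]
    · simp [h, Finset.max'_mem]
  · -- key lemma: for u ∈ X adjacent to v ∈ Y, min ≠ max
    have key : ∀ u v, G.Adj u v → u ∈ X → v ∈ Y →
        (L u).min' (hne u) ≠ (L v).max' (hne v) := by
      intro u v hadj hu hv heq
      have hcard := hshare u v hadj
      obtain ⟨a, ha, b, hb, hab⟩ := Finset.one_lt_card.mp hcard
      have ha1 := Finset.mem_inter.mp ha
      have hb1 := Finset.mem_inter.mp hb
      have h1 : (L u).min' (hne u) ≤ a := Finset.min'_le _ _ ha1.1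
      have h2 : a ≤ (L v).max' (hne v) := Finset.le_max' _ _ ha1.2
      have h3 : (L u).min' (hne u) ≤ b := Finset.min'_le _ _ hb1.1
      have h4 : b ≤ (L v).max' (hne v) := Finset.le_max' _ _ hb1.2
      omega
    intro u v hadj
    have hnXY : ∀ w, w ∈ Y → w ∉ X := fun w hw hw' =>
      Set.disjoint_left.mp hdisj hw' hw
    rcases hbip u v hadj with ⟨hu, hv⟩ | ⟨hu, hv⟩
    · simp only [hu, hnXY v hv, if_true, if_false, if_pos, if_neg]
      exact key u v hadj hu hv
    · simp only [hv, hnXY u hu, if_true, if_false, if_pos, if_neg]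
      exact fun h => key v u hadj.symm hv hu h.symm
end

section
/- Let G be a graph admitting a proper j-coloring, let k ≥ j, and let L be a k-list assignment on G such that the union of all lists has size at most j(k-1)/(j-1). Then G has a proper coloring chosen from the lists L. -/
/-- If G is j-colorable, k ≥ j ≥ 2, and L is a k-list assignment whose union of lists
has size at most j(k-1)/(j-1), then G has a proper coloring chosen from L. -/
theorem stmt_1 {V : Type} [Fintype V] (G : SimpleGraph V)
    (j k : ℕ) (hj : 2 ≤ j) (hk : j ≤ k)
    (hcol : G.Colorable j)
    (L : V → Finset ℕ) (hL : ∀ v, (L v).card = k)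
    (hU : ((Finset.univ.biUnion L).card : ℝ) ≤ ((j : ℝ) * ((k : ℝ) - 1)) / ((j : ℝ) - 1)) :
    ∃ f : V → ℕ, (∀ v, f v ∈ L v) ∧ ∀ u v, G.Adj u v → f u ≠ f v := by
  classical
  by_cases hV : Nonempty V
  swap
  · exact ⟨fun _ => 0, fun v => (hV ⟨v⟩).elim, fun u v _ => (hV ⟨u⟩).elim⟩
  obtain ⟨C⟩ := hcol
  set U : Finset ℕ := Finset.univ.biUnion L with hUdef
  set m := U.card with hm
  have hLU : ∀ v, L v ⊆ U := fun v => Finset.subset_biUnion_of_mem L (Finset.mem_univ v)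
  have hkm : k ≤ m := by
    obtain ⟨v0⟩ := hV
    calc k = (L v0).card := (hL v0).symm
      _ ≤ m := Finset.card_le_card (hLU v0)
  set s := m + 1 - k with hs
  have hs1 : 1 ≤ s := by omega
  -- key counting inequality : j * s ≤ m
  have hjm : j * s ≤ m := by
    have hj1 : (1:ℝ) ≤ (j:ℝ) - 1 := by
      have : (2:ℝ) ≤ (j:ℝ) := by exact_mod_cast hj
      linarith
    have h2 : (m:ℝ) * ((j:ℝ) - 1) ≤ (j:ℝ) * ((k:ℝ) - 1) :=
      (le_div_iff₀ (by linarith)).mp hU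
    have h3 : (m:ℝ) * (((j - 1 : ℕ)):ℝ) ≤ (j:ℝ) * (((k - 1 : ℕ)):ℝ) := by
      push_cast [Nat.cast_sub (by omega : 1 ≤ j), Nat.cast_sub (by omega : 1 ≤ k)]
      exact h2
    have h4 : m * (j - 1) ≤ j * (k - 1) := by exact_mod_cast h3
    rw [hs]
    zify [show k ≤ m + 1 from by omega, show 1 ≤ j from by omega,
      show 1 ≤ k from by omega] at h4 ⊢
    nlinarith
  -- enumerate U and define a class function on colors
  set e := U.equivFin with he
  set cls : ℕ → ℕ := fun c => if h : c ∈ U then min ((e ⟨c, h⟩ : Fin m) / s) (j - 1) else 0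
    with hcls
  -- each class fiber has at least s colors
  have hfiber : ∀ i : ℕ, i ≤ j - 1 → s ≤ (U.filter (fun c => cls c = i)).card := by
    intro i hi
    have hcard : (Finset.Ico (i * s) (i * s + s)).card = s := by
      rw [Nat.card_Ico]; omega
    have h5 : i * s + s ≤ j * s := by
      calc i * s + s = (i + 1) * s := by ring
        _ ≤ j * s := Nat.mul_le_mul_right s (by omega)
    rw [← hcard]
    apply Finset.card_le_card_of_injOn (fun q => if h : q < m then ((e.symm ⟨q, h⟩ : U) : ℕ) else 0)
    · intro q hq
      rw [Finset.mem_coe, Finset.mem_Ico] at hq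
      have hqm : q < m := by omega
      simp only [dif_pos hqm]
      rw [Finset.mem_coe, Finset.mem_filter]
      refine ⟨(e.symm ⟨q, hqm⟩).2, ?_⟩
      rw [hcls]
      simp only [dif_pos (e.symm ⟨q, hqm⟩).2]
      have : (⟨((e.symm ⟨q, hqm⟩ : U) : ℕ), (e.symm ⟨q, hqm⟩).2⟩ : U) = e.symm ⟨q, hqm⟩ :=
        Subtype.ext rfl
      rw [this, Equiv.apply_symm_apply]
      have hdiv : q / s = i := Nat.div_eq_of_lt_le (by omega) (by simpa [Nat.succ_mul] using (by omega : q < i * s + s))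
      simp [hdiv, min_eq_left hi]
    · intro q1 hq1 q2 hq2 hfe
      rw [Finset.mem_coe, Finset.mem_Ico] at hq1 hq2
      have hq1m : q1 < m := by omega
      have hq2m : q2 < m := by omega
      simp only [dif_pos hq1m, dif_pos hq2m] at hfe
      have := e.symm.injective (Subtype.coe_injective hfe)
      exact congrArg Fin.val this
  -- each vertex's list meets the fiber of its color class
  have hnon : ∀ v, ((L v) ∩ U.filter (fun c => cls c = (C v : ℕ))).Nonempty := by
    intro v
    have hiv : (C v : ℕ) ≤ j - 1 := by have := (C v).isLt; omega
    have h1 := hfiber _ hiv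
    have h2 := Finset.card_union_add_card_inter (L v) (U.filter (fun c => cls c = (C v : ℕ)))
    have h3 : ((L v) ∪ U.filter (fun c => cls c = (C v : ℕ))).card ≤ m :=
      Finset.card_le_card (Finset.union_subset (hLU v) (Finset.filter_subset _ _))
    have h4 := hL v
    rw [← Finset.card_pos]
    omega
  choose f hf using hnon
  refine ⟨f, fun v => (Finset.mem_inter.mp (hf v)).1, ?_⟩
  intro u v huv hne
  have hu := (Finset.mem_filter.mp (Finset.mem_inter.mp (hf u)).2).2
  have hv := (Finset.mem_filter.mp (Finset.mem_inter.mp (hf v)).2).2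
  have : (C u : ℕ) = (C v : ℕ) := by rw [← hu, ← hv, hne]
  exact C.valid huv (Fin.ext this)
end

section
/- For every j ≥ 2 and k ≥ j, there exists a j-colorable graph G and a k-list assignment L with |⋃_v L(v)| = ⌊j(k-1)/(j-1)⌋ + 1 such that G has no proper coloring chosen from L. -/
/-- Sharpness: for j ≥ 2 and k ≥ j, there is a j-colorable graph and a k-list
assignment with union of size ⌊j(k-1)/(j-1)⌋ + 1 admitting no proper coloring. -/
theorem stmt_2 (j k : ℕ) (hj : 2 ≤ j) (hk : j ≤ k) :
    ∃ (n : ℕ) (G : SimpleGraph (Fin n)) (L : Fin n → Finset ℕ),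
      G.Colorable j ∧ (∀ v, (L v).card = k) ∧
      (Finset.univ.biUnion L).card = j * (k - 1) / (j - 1) + 1 ∧
      ¬∃ f : Fin n → ℕ, (∀ v, f v ∈ L v) ∧ ∀ u v, G.Adj u v → f u ≠ f v := by
  classical
  set m : ℕ := j * (k - 1) / (j - 1) + 1 with hm
  have hj1 : 0 < j - 1 := by omega
  have hdm := Nat.div_add_mod (j * (k - 1)) (j - 1)
  have hmod := Nat.mod_lt (j * (k - 1)) hj1
  -- m ≥ k
  have hq : k - 1 ≤ j * (k - 1) / (j - 1) := by
    rw [Nat.le_div_iff_mul_le hj1]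
    calc (k - 1) * (j - 1) ≤ (k - 1) * j := Nat.mul_le_mul_left _ (by omega)
      _ = j * (k - 1) := Nat.mul_comm _ _
  have hmk : k ≤ m := by omega
  -- key arithmetic inequality: j*(k-1) < (j-1)*m
  have hma : j * (k - 1) < (j - 1) * m := by
    rw [hm, Nat.mul_add, Nat.mul_one]
    linarith
  -- the construction
  clear_value m
  set U : Finset ℕ := Finset.range m with hU
  set S : Finset (Finset ℕ) := U.powersetCard k with hS
  set N : ℕ := S.card with hN
  set p : Fin (N * j) → Fin j := fun v => (finProdFinEquiv.symm v).2 with hp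
  set q : Fin (N * j) → Fin N := fun v => (finProdFinEquiv.symm v).1 with hqdef
  set e : Fin N → Finset ℕ := fun i => (S.equivFin.symm i : Finset ℕ) with he
  have heS : ∀ i, e i ∈ S := fun i => (S.equivFin.symm i).2
  have hsur : ∀ T ∈ S, ∀ pp : Fin j, ∃ v, p v = pp ∧ e (q v) = T := by
    intro T hT pp
    refine ⟨finProdFinEquiv (S.equivFin ⟨T, hT⟩, pp), ?_, ?_⟩
    · show (finProdFinEquiv.symm (finProdFinEquiv (S.equivFin ⟨T, hT⟩, pp))).2 = pp
      rw [Equiv.symm_apply_apply]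
    · show (↑(S.equivFin.symm
          (finProdFinEquiv.symm (finProdFinEquiv (S.equivFin ⟨T, hT⟩, pp))).1) : Finset ℕ) = T
      rw [Equiv.symm_apply_apply, Equiv.symm_apply_apply]
  refine ⟨N * j,
    { Adj := fun u v => p u ≠ p v
      symm := ⟨fun u v h => Ne.symm h⟩
      loopless := ⟨fun v h => h rfl⟩ },
    fun v => e (q v), ⟨SimpleGraph.Coloring.mk p fun h => h⟩, ?_, ?_, ?_⟩
  · intro v
    exact (Finset.mem_powersetCard.mp (heS (q v))).2
  · have : (Finset.univ.biUnion fun v : Fin (N * j) => e (q v)) = U := by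
      apply Finset.Subset.antisymm
      · intro x hx
        obtain ⟨v, _, hv⟩ := Finset.mem_biUnion.mp hx
        exact (Finset.mem_powersetCard.mp (heS (q v))).1 hv
      · intro x hx
        obtain ⟨T, hxT, hTU, hTcard⟩ :=
          Finset.exists_subsuperset_card_eq (s := {x}) (t := U) (n := k)
            (Finset.singleton_subset_iff.mpr hx)
            (by rw [Finset.card_singleton]; omega)
            (by rw [hU, Finset.card_range]; exact hmk)
        obtain ⟨v, _, hv⟩ := hsur T (Finset.mem_powersetCard.mpr ⟨hTU, hTcard⟩)
          ⟨0, by omega⟩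
        exact Finset.mem_biUnion.mpr ⟨v, Finset.mem_univ v, by rw [hv]; exact hxT (by simp)⟩
    rw [this, hU, Finset.card_range]
  · rintro ⟨f, hf, hvalid⟩
    -- colors used in each part
    set C : Fin j → Finset ℕ :=
      fun pp => (Finset.univ.filter fun v => p v = pp).image f with hC
    have hCU : ∀ pp, C pp ⊆ U := by
      intro pp x hx
      obtain ⟨v, _, rfl⟩ := Finset.mem_image.mp hx
      exact (Finset.mem_powersetCard.mp (heS (q v))).1 (hf v)
    have hdisj : ∀ pp ∈ (Finset.univ : Finset (Fin j)), ∀ pp' ∈ Finset.univ,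
        pp ≠ pp' → Disjoint (C pp) (C pp') := by
      intro pp _ pp' _ hne
      rw [Finset.disjoint_left]
      intro x hx hx'
      obtain ⟨u, hu, hufx⟩ := Finset.mem_image.mp hx
      obtain ⟨v, hv, hvfx⟩ := Finset.mem_image.mp hx'
      have hpu : p u = pp := (Finset.mem_filter.mp hu).2
      have hpv : p v = pp' := (Finset.mem_filter.mp hv).2
      exact hvalid u v (show p u ≠ p v by rw [hpu, hpv]; exact hne) (by rw [hufx, hvfx])
    -- every k-subset of U meets every C pp
    have hhit : ∀ T ∈ S, ∀ pp, ∃ x ∈ T, x ∈ C pp := by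
      intro T hT pp
      obtain ⟨v, hpv, hev⟩ := hsur T hT pp
      refine ⟨f v, by rw [← hev]; exact hf v, ?_⟩
      exact Finset.mem_image.mpr ⟨v, Finset.mem_filter.mpr ⟨Finset.mem_univ v, hpv⟩, rfl⟩
    -- hence each C pp is large
    have hbig : ∀ pp, m - (k - 1) ≤ (C pp).card := by
      intro pp
      have hsd : (U \ C pp).card ≤ k - 1 := by
        by_contra hcon
        push_neg at hcon
        obtain ⟨T, hTsub, hTcard⟩ :=
          Finset.exists_subset_card_eq (s := U \ C pp) (n := k) (by omega)
        have hTS : T ∈ S := Finset.mem_powersetCard.mpr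
          ⟨hTsub.trans (Finset.sdiff_subset), hTcard⟩
        obtain ⟨x, hxT, hxC⟩ := hhit T hTS pp
        exact (Finset.mem_sdiff.mp (hTsub hxT)).2 hxC
      have := Finset.card_sdiff_of_subset (hCU pp)
      have hle := Finset.card_le_card (hCU pp)
      simp only [hU, Finset.card_range] at this hle hsd
      omega
    -- summing
    have hsum : ∑ pp : Fin j, (C pp).card ≤ m := by
      rw [← Finset.card_biUnion hdisj]
      have : (Finset.univ.biUnion C) ⊆ U :=
        Finset.biUnion_subset.mpr fun pp _ => hCU pp
      simpa [hU] using Finset.card_le_card this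
    have hsum2 : j * (m - (k - 1)) ≤ m := by
      calc j * (m - (k - 1)) = ∑ _pp : Fin j, (m - (k - 1)) := by
            simp [Finset.sum_const, Nat.mul_comm]
        _ ≤ ∑ pp : Fin j, (C pp).card := Finset.sum_le_sum fun pp _ => hbig pp
        _ ≤ m := hsum
    -- final contradiction
    obtain ⟨a, rfl⟩ : ∃ a, j = a + 1 := ⟨j - 1, by omega⟩
    obtain ⟨b, rfl⟩ : ∃ b, k = b + 1 := ⟨k - 1, by omega⟩
    obtain ⟨c, hc⟩ : ∃ c, m = c + b := ⟨m - b, by omega⟩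
    rw [hc] at hma hsum2
    simp only [Nat.add_sub_cancel] at hma hsum2
    have h1 : b < a * c := by nlinarith
    have h2 : a * c ≤ b := by nlinarith
    omega
end

section
/- For all positive integers d and r, there exists a bipartite graph G of girth at least 4 (i.e., a simple bipartite graph) consisting of a complete d-ary rooted tree of height 2r+1 together with, for each leaf, r additional edges joining that leaf to r of its ancestors in the tree. Moreover, height 2r+1 is the minimum possible: no such graph exists on a complete d-ary tree of height less than 2r+1 when d ≥ 1. -/
lemma zmod2_ne_of_mod {a b : ℕ} (h : a % 2 ≠ b % 2) : (a : ZMod 2) ≠ (b : ZMod 2) := by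
  intro hc
  exact h ((ZMod.natCast_eq_natCast_iff a b 2).mp hc)

lemma zmod2_mod_of_ne {a b : ℕ} (h : (a : ZMod 2) ≠ (b : ZMod 2)) : a % 2 ≠ b % 2 := by
  intro hc
  exact h ((ZMod.natCast_eq_natCast_iff a b 2).mpr hc)

lemma zmod2_ne_iff : ∀ (a b : ZMod 2), a ≠ b ↔ a = b + 1 := by decide

lemma zmod2_cancel : ∀ (a b c : ZMod 2), a + b ≠ a + c → b ≠ c := by decide

/-- m(d,r,4) = 2r+1: for all d,r ≥ 1 there is a bipartite (hence girth ≥ 4)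
r-augmented complete d-ary tree of height 2r+1 (vertices = lists over Fin d of
length ≤ 2r+1; tree edges join a vertex to its children; each leaf gets r extra
edges to non-parent proper ancestors), and no such graph exists with height
less than 2r+1. -/
theorem stmt_4 (d r : ℕ) (hd : 1 ≤ d) (hr : 1 ≤ r) :
    (∃ aug : {l : List (Fin d) // l.length ≤ 2 * r + 1} →
        Finset {l : List (Fin d) // l.length ≤ 2 * r + 1},
      (∀ v, v.val.length = 2 * r + 1 → (aug v).card = r ∧
        ∀ x ∈ aug v, x.val <+: v.val ∧ x.val.length + 1 < v.val.length) ∧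
      (SimpleGraph.fromRel (fun x y =>
        (∃ a : Fin d, y.val = x.val ++ [a]) ∨
        (x.val.length = 2 * r + 1 ∧ y ∈ aug x))).Colorable 2) ∧
    (∀ m, m < 2 * r + 1 →
      ¬∃ aug : {l : List (Fin d) // l.length ≤ m} →
          Finset {l : List (Fin d) // l.length ≤ m},
        (∀ v, v.val.length = m → (aug v).card = r ∧
          ∀ x ∈ aug v, x.val <+: v.val ∧ x.val.length + 1 < v.val.length) ∧
        (SimpleGraph.fromRel (fun x y =>
          (∃ a : Fin d, y.val = x.val ++ [a]) ∨
          (x.val.length = m ∧ y ∈ aug x))).Colorable 2) := by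
  constructor
  · -- Existence at height 2r+1
    refine ⟨fun v => (Finset.range r).image (fun k =>
        (⟨v.val.take (2 * k), by
          have := v.2; rw [List.length_take]; omega⟩ :
          {l : List (Fin d) // l.length ≤ 2 * r + 1})), ?_, ?_⟩
    · intro v hv
      constructor
      · rw [Finset.card_image_of_injOn, Finset.card_range]
        intro a ha b hb hab
        have h1 : (v.val.take (2 * a)).length = (v.val.take (2 * b)).length := by
          rw [Subtype.mk.injEq] at hab; rw [hab]
        simp only [Finset.coe_range, Set.mem_Iio] at ha hb
        rw [List.length_take, List.length_take, hv] at h1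
        omega
      · intro x hx
        simp only [Finset.mem_image, Finset.mem_range] at hx
        obtain ⟨k, hk, rfl⟩ := hx
        refine ⟨List.take_prefix _ _, ?_⟩
        rw [List.length_take, hv]
        omega
    · have key : ∀ x y : {l : List (Fin d) // l.length ≤ 2 * r + 1},
          ((∃ a : Fin d, y.val = x.val ++ [a]) ∨
            (x.val.length = 2 * r + 1 ∧ y ∈ (Finset.range r).image (fun k =>
              (⟨x.val.take (2 * k), by
                have := x.2; rw [List.length_take]; omega⟩ :
                {l : List (Fin d) // l.length ≤ 2 * r + 1})))) →
          ((x.val.length : ZMod 2) ≠ (y.val.length : ZMod 2)) := by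
        rintro x y (⟨a, ha⟩ | ⟨hx, hy⟩)
        · apply zmod2_ne_of_mod
          rw [ha, List.length_append]
          simp; omega
        · simp only [Finset.mem_image, Finset.mem_range] at hy
          obtain ⟨k, hk, hyk⟩ := hy
          apply zmod2_ne_of_mod
          rw [← hyk, List.length_take, hx]
          omega
      have C : (SimpleGraph.fromRel (fun x y : {l : List (Fin d) // l.length ≤ 2 * r + 1} =>
          (∃ a : Fin d, y.val = x.val ++ [a]) ∨
          (x.val.length = 2 * r + 1 ∧ y ∈ (Finset.range r).image (fun k =>
            (⟨x.val.take (2 * k), by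
              have := x.2; rw [List.length_take]; omega⟩ :
              {l : List (Fin d) // l.length ≤ 2 * r + 1}))))).Coloring (ZMod 2) := by
        refine SimpleGraph.Coloring.mk (fun v => (v.val.length : ZMod 2)) ?_
        intro x y hadj
        rw [SimpleGraph.fromRel_adj] at hadj
        rcases hadj.2 with h | h
        · exact key x y h
        · exact (key y x h).symm
      have := C.colorable
      rwa [ZMod.card] at this
  · -- Lower bound
    intro m hm
    rintro ⟨aug, haug, hcol⟩
    set z : Fin d := ⟨0, hd⟩ with hz
    set w : ℕ → {l : List (Fin d) // l.length ≤ m} :=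
      fun k => ⟨List.replicate (min k m) z, by simp⟩ with hw
    obtain ⟨C⟩ := hcol
    set g : {l : List (Fin d) // l.length ≤ m} → ZMod 2 := fun v => (C v : Fin 2) with hg
    have hwval : ∀ k, k ≤ m → (w k).val = List.replicate k z := by
      intro k hk; simp [hw, Nat.min_eq_left hk]
    have hwlen : ∀ k, k ≤ m → (w k).val.length = k := by
      intro k hk; rw [hwval k hk, List.length_replicate]
    -- colors along the root-to-leaf path
    have hstep : ∀ k, k < m → g (w (k + 1)) = g (w k) + 1 := by
      intro k hk
      have hadj : (SimpleGraph.fromRel (fun x y : {l : List (Fin d) // l.length ≤ m} =>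
          (∃ a : Fin d, y.val = x.val ++ [a]) ∨
          (x.val.length = m ∧ y ∈ aug x))).Adj (w k) (w (k + 1)) := by
        rw [SimpleGraph.fromRel_adj]
        constructor
        · intro he
          have h1 : (w k).val.length = (w (k + 1)).val.length := by rw [he]
          rw [hwlen k (by omega), hwlen (k+1) (by omega)] at h1
          omega
        · left; left
          exact ⟨z, by rw [hwval k (by omega), hwval (k+1) (by omega),
            List.replicate_succ']⟩
      have hv := C.valid hadj
      have hne : g (w (k + 1)) ≠ g (w k) := fun h => hv (show C (w k) = C (w (k+1)) from h.symm)
      exact (zmod2_ne_iff _ _).mp hne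
    have hparity : ∀ k, k ≤ m → g (w k) = g (w 0) + (k : ZMod 2) := by
      intro k
      induction k with
      | zero => intro _; simp
      | succ k ih =>
        intro hk
        rw [hstep k (by omega), ih (by omega)]
        push_cast
        ring
    obtain ⟨hcard, hmem⟩ := haug (w m) (hwlen m le_rfl)
    -- every augmented neighbor of the leaf has length of parity ≠ m, and is short
    have hkey : ∀ x ∈ aug (w m), x.val.length % 2 ≠ m % 2 ∧ x.val.length + 1 < m ∧
        x = w x.val.length := by
      intro x hx
      obtain ⟨hpre, hlen⟩ := hmem x hx
      rw [hwlen m le_rfl] at hlen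
      have hxval : x.val = List.replicate x.val.length z := by
        rw [List.eq_replicate_length]
        intro b hb
        exact List.eq_of_mem_replicate (by
          have := hpre.sublist.subset hb
          rwa [hwval m le_rfl] at this)
      have hxw : x = w x.val.length := by
        apply Subtype.ext
        rw [hwval x.val.length (by omega)]
        exact hxval
      have hadj : (SimpleGraph.fromRel (fun x y : {l : List (Fin d) // l.length ≤ m} =>
          (∃ a : Fin d, y.val = x.val ++ [a]) ∨
          (x.val.length = m ∧ y ∈ aug x))).Adj (w m) x := by
        rw [SimpleGraph.fromRel_adj]
        constructor
        · intro he
          have h1 : (w m).val.length = x.val.length := by rw [he]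
          rw [hwlen m le_rfl] at h1
          omega
        · left; right
          exact ⟨hwlen m le_rfl, hx⟩
      have hv := C.valid hadj
      have hne : g (w m) ≠ g x := fun h => hv (show C (w m) = C x from h)
      rw [hxw, hparity m le_rfl, hparity x.val.length (by omega)] at hne
      have hne2 : (m : ZMod 2) ≠ (x.val.length : ZMod 2) := zmod2_cancel _ _ _ hne
      exact ⟨fun h => zmod2_mod_of_ne hne2 h.symm, hlen, hxw⟩
    -- counting: lengths/2 inject into range (r-1)
    have hmaps : ∀ x ∈ aug (w m), x.val.length / 2 ∈ Finset.range (r - 1) := by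
      intro x hx
      obtain ⟨h1, h2, _⟩ := hkey x hx
      rw [Finset.mem_range]
      omega
    have hinj : Set.InjOn (fun x : {l : List (Fin d) // l.length ≤ m} => x.val.length / 2)
        (aug (w m)) := by
      intro x hx y hy hfxy
      obtain ⟨hx1, hx2, hx3⟩ := hkey x hx
      obtain ⟨hy1, hy2, hy3⟩ := hkey y hy
      simp only [] at hfxy
      have : x.val.length = y.val.length := by omega
      rw [hx3, hy3, this]
    have hle := Finset.card_le_card_of_injOn _ hmaps hinj
    rw [hcard, Finset.card_range] at hle
    omega
end

section
/- The graph consisting of two cycles of even length g ≥ 4 sharing exactly one vertex is bipartite, has girth g, is not 2-choosable, and every proper subgraph of it has average degree at most 2. -/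
/-- G is k-choosable: from every assignment of k-element lists a proper coloring
can be chosen. -/
def Choosable {V : Type} (G : SimpleGraph V) (k : ℕ) : Prop :=
  ∀ L : V → Finset ℕ, (∀ v, (L v).card = k) →
    ∃ f : V → ℕ, (∀ v, f v ∈ L v) ∧ ∀ u v, G.Adj u v → f u ≠ f v

open SimpleGraph Walk


variable {V : Type} {G : SimpleGraph V}

lemma getVert_eq_support_getElem {a b : V} (p : G.Walk a b) :
    ∀ i (h : i < p.support.length), p.getVert i = p.support[i] := by
  induction p with
  | nil => intro i h; simp at h; simp [h]
  | cons hadj q ih =>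
    intro i h
    cases i with
    | zero => simp
    | succ n =>
      simp only [support_cons, List.length_cons] at h
      simp only [getVert_cons_succ, support_cons, List.getElem_cons_succ]
      exact ih n (by simpa [Walk.length_support] using h)

lemma support_tail_length {a b : V} (p : G.Walk a b) :
    p.support.tail.length = p.length := by
  cases p <;> simp [support_cons, Walk.length_support]

lemma getVert_eq_support_tail_getElem {a b : V} (p : G.Walk a b) (m : ℕ)
    (hm1 : 1 ≤ m) (hm2 : m ≤ p.length) :
    p.getVert m = p.support.tail[m-1]'(by rw [support_tail_length]; omega) := by
  obtain ⟨m', rfl⟩ : ∃ m', m = m' + 1 := ⟨m - 1, by omega⟩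
  rw [getVert_eq_support_getElem p (m' + 1) (by rw [Walk.length_support]; omega)]
  rcases p with _ | ⟨h, q⟩
  · simp at hm2
  · simp [support_cons, List.tail_cons]

lemma cyc_getVert_inj {a : V} {c : G.Walk a a} (hc : c.IsCycle)
    {i j : ℕ} (hi1 : 1 ≤ i) (hi2 : i ≤ c.length) (hj1 : 1 ≤ j) (hj2 : j ≤ c.length)
    (h : c.getVert i = c.getVert j) : i = j := by
  have hnd : c.support.tail.Nodup := hc.2
  have htl : c.support.tail.length = c.length := support_tail_length c
  rw [getVert_eq_support_tail_getElem c i hi1 hi2,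
    getVert_eq_support_tail_getElem c j hj1 hj2] at h
  have := (List.Nodup.getElem_inj_iff hnd).mp h
  omega

lemma mem_edges_iff_getVert {a b : V} {p : G.Walk a b} {e : Sym2 V} :
    e ∈ p.edges ↔ ∃ i, i < p.length ∧ s(p.getVert i, p.getVert (i+1)) = e := by
  rw [← Walk.mem_edges_toSubgraph]
  induction e with
  | _ x y =>
    rw [Subgraph.mem_edgeSet, toSubgraph_adj_iff]
    tauto

lemma getVert_mem_support {a b : V} (p : G.Walk a b) (i : ℕ) : p.getVert i ∈ p.support := by
  by_cases h : i ≤ p.length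
  · exact mem_support_iff_exists_getVert.mpr ⟨i, rfl, h⟩
  · rw [getVert_of_length_le p (by omega)]
    exact end_mem_support p

lemma closed_mem_support_tail_iff {a : V} {p : G.Walk a a} (hp : ¬ p.Nil) (v : V) :
    v ∈ p.support ↔ v ∈ p.support.tail := by
  have hlen : 1 ≤ p.length := by
    rcases Nat.eq_zero_or_pos p.length with h | h
    · exact absurd (nil_iff_length_eq.mpr h) hp
    · omega
  constructor
  · intro hv
    rw [support_eq_cons] at hv
    rcases List.mem_cons.mp hv with rfl | h
    · have := getVert_eq_support_tail_getElem p p.length hlen le_rfl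
      rw [getVert_length] at this
      have hb : p.length - 1 < p.support.tail.length := by
        rw [support_tail_length]; omega
      have hm : p.support.tail[p.length - 1] ∈ p.support.tail := List.getElem_mem hb
      rwa [← this] at hm
    · exact h
  · intro hv
    exact List.mem_of_mem_tail hv

lemma mem_support_rotate_iff [DecidableEq V] {a b : V} {p : G.Walk a a}
    (hp : ¬ p.Nil) (hb : b ∈ p.support) (v : V) :
    v ∈ (p.rotate b hb).support ↔ v ∈ p.support := by
  have hrot := Walk.support_rotate p b hb
  have hnil' : ¬ (p.rotate b hb).Nil := by
    rw [nil_iff_length_eq]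
    have : (p.rotate b hb).support.tail.length = p.support.tail.length := hrot.perm.length_eq
    rw [support_tail_length, support_tail_length] at this
    rw [this]
    intro h
    exact hp (nil_iff_length_eq.mpr h)
  rw [closed_mem_support_tail_iff hp, closed_mem_support_tail_iff hnil',
    hrot.perm.mem_iff]

lemma exists_idx {a : V} {c : G.Walk a a} (hc : c.IsCycle) {v : V} (hv : v ∈ c.support) :
    ∃ i, 1 ≤ i ∧ i ≤ c.length ∧ c.getVert i = v := by
  obtain ⟨n, hn, hnl⟩ := mem_support_iff_exists_getVert.mp hv
  have h3 := hc.three_le_length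
  rcases Nat.eq_zero_or_pos n with rfl | hpos
  · exact ⟨c.length, by omega, le_rfl, by rw [getVert_length, ← hn, getVert_zero]⟩
  · exact ⟨n, hpos, hnl, hn⟩

lemma edge_not_both {u : V} {c1 c2 : G.Walk u u}
    (hshare : ∀ v, v ∈ c1.support → v ∈ c2.support → v = u)
    {e : Sym2 V} (h1 : e ∈ c1.edges) (h2 : e ∈ c2.edges) : False := by
  induction e with
  | _ x y =>
    have hx : x = u := hshare x (c1.fst_mem_support_of_mem_edges h1)
      (c2.fst_mem_support_of_mem_edges h2)
    have hy : y = u := hshare y (c1.snd_mem_support_of_mem_edges h1)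
      (c2.snd_mem_support_of_mem_edges h2)
    subst hx hy
    exact G.irrefl (c1.adj_of_mem_edges h1)

lemma support_subset_cycle_support
    {u : V} {c1 c2 : G.Walk u u}
    (hshare : ∀ v, v ∈ c1.support → v ∈ c2.support → v = u)
    (hedges : ∀ e, e ∈ G.edgeSet → e ∈ c1.edges ∨ e ∈ c2.edges)
    {a : V} (w : G.Walk a a) (hw : w.IsCycle)
    (ha1 : a ∈ c1.support) (ha2 : a ∉ c2.support) :
    ∀ v ∈ w.support, v ∈ c1.support := by
  classical
  by_contra hcon
  push_neg at hcon
  obtain ⟨v2, hv2w, hv2⟩ := hcon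
  have h3 : 3 ≤ w.length := hw.three_le_length
  set n := w.length with hn
  obtain ⟨j, hj, hjle⟩ := mem_support_iff_exists_getVert.mp hv2w
  have hj1 : 1 ≤ j := by
    rcases Nat.eq_zero_or_pos j with rfl | h
    · rw [getVert_zero] at hj; exact absurd (hj ▸ ha1) hv2
    · exact h
  have hjn : j < n := by
    rcases eq_or_lt_of_le hjle with rfl | h
    · rw [getVert_length] at hj; exact absurd (hj ▸ ha1) hv2
    · exact h
  have hex : ∃ m, w.getVert m ∉ c1.support := ⟨j, by rw [hj]; exact hv2⟩
  set k := Nat.find hex with hkdef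
  have hk : w.getVert k ∉ c1.support := Nat.find_spec hex
  have hmin : ∀ m, m < k → w.getVert m ∈ c1.support := fun m hm =>
    not_not.mp (Nat.find_min hex hm)
  have hkle : k ≤ j := Nat.find_le (by rw [hj]; exact hv2)
  have hk1 : 1 ≤ k := by
    rcases Nat.eq_zero_or_pos k with h0 | h
    · rw [h0] at hk; rw [getVert_zero] at hk; exact absurd ha1 hk
    · exact h
  have hedge : s(w.getVert (k-1), w.getVert k) ∈ w.edges := by
    refine mem_edges_iff_getVert.mpr ⟨k-1, by omega, ?_⟩
    rw [show k - 1 + 1 = k from by omega]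
  have hu1 : w.getVert (k-1) = u := by
    rcases hedges _ (w.edges_subset_edgeSet hedge) with h | h
    · exact absurd (c1.snd_mem_support_of_mem_edges h) hk
    · exact hshare _ (hmin (k-1) (by omega)) (c2.fst_mem_support_of_mem_edges h)
  have hk2 : 2 ≤ k := by
    by_contra h
    have : k = 1 := by omega
    rw [this] at hu1
    simp only [Nat.sub_self, getVert_zero] at hu1
    exact ha2 (hu1 ▸ c2.start_mem_support)
  -- backward direction, along the reversed walk
  have hexr : ∃ m, w.reverse.getVert m ∉ c1.support :=
    ⟨n - j, by rw [getVert_reverse, show n - (n - j) = j from by omega, hj]; exact hv2⟩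
  set k' := Nat.find hexr with hk'def
  have hk' : w.reverse.getVert k' ∉ c1.support := Nat.find_spec hexr
  have hmin' : ∀ m, m < k' → w.reverse.getVert m ∈ c1.support := fun m hm =>
    not_not.mp (Nat.find_min hexr hm)
  have hk'le : k' ≤ n - j := Nat.find_le
    (by rw [getVert_reverse, show n - (n - j) = j from by omega, hj]; exact hv2)
  have hk'1 : 1 ≤ k' := by
    rcases Nat.eq_zero_or_pos k' with h0 | h
    · rw [h0, getVert_zero] at hk'; exact absurd ha1 hk'
    · exact h
  have hrlen : w.reverse.length = n := w.length_reverse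
  have hedge' : s(w.reverse.getVert (k'-1), w.reverse.getVert k') ∈ w.reverse.edges := by
    refine mem_edges_iff_getVert.mpr ⟨k'-1, by omega, ?_⟩
    rw [show k' - 1 + 1 = k' from by omega]
  have hu2 : w.reverse.getVert (k'-1) = u := by
    rcases hedges _ (w.reverse.edges_subset_edgeSet hedge') with h | h
    · exact absurd (c1.snd_mem_support_of_mem_edges h) hk'
    · exact hshare _ (hmin' (k'-1) (by omega)) (c2.fst_mem_support_of_mem_edges h)
  have hk'2 : 2 ≤ k' := by
    by_contra h
    have : k' = 1 := by omega
    rw [this] at hu2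
    simp only [Nat.sub_self, getVert_zero] at hu2
    exact ha2 (hu2 ▸ c2.start_mem_support)
  rw [getVert_reverse] at hu2
  have hkey : k - 1 = n - (k' - 1) :=
    cyc_getVert_inj hw (by omega) (by omega) (by omega) (by omega) (hu1.trans hu2.symm)
  have hlast : w.getVert (n - k') ∈ c1.support := hmin (n - k') (by omega)
  rw [getVert_reverse] at hk'
  exact hk' hlast

lemma cycle_adj_classify {u : V} {c : G.Walk u u} (hc : c.IsCycle) {i : ℕ}
    (hi1 : 1 ≤ i) (hi2 : i ≤ c.length) {b : V} (hb : s(c.getVert i, b) ∈ c.edges) :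
    b = c.getVert (if i = c.length then 1 else i + 1) ∨
      b = c.getVert (if i = 1 then c.length else i - 1) := by
  have h3 := hc.three_le_length
  set n := c.length with hndef
  obtain ⟨j, hjn, hs⟩ := mem_edges_iff_getVert.mp hb
  have h0n : c.getVert 0 = c.getVert n := by rw [getVert_zero, getVert_length]
  rw [Sym2.eq_iff] at hs
  rcases hs with ⟨hji, hjb⟩ | ⟨hjb, hji⟩
  · rcases Nat.eq_zero_or_pos j with rfl | hj1
    · rw [h0n] at hji
      have : n = i := cyc_getVert_inj hc (by omega) le_rfl hi1 hi2 hji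
      left; rw [if_pos this.symm, ← hjb]
    · have : j = i := cyc_getVert_inj hc hj1 (by omega) hi1 hi2 hji
      subst this
      left; rw [if_neg (by omega), ← hjb]
  · have : j + 1 = i := cyc_getVert_inj hc (by omega) (by omega) hi1 hi2 hji
    rcases Nat.eq_zero_or_pos j with rfl | hj1
    · right; rw [if_pos (by omega), ← hjb, getVert_zero]; exact (getVert_length c).symm
    · right; rw [if_neg (by omega), ← hjb, show i - 1 = j from by omega]

lemma cycle_two_neighbors {a : V} {w : G.Walk a a} (hw : w.IsCycle) {v : V}
    (hv : v ∈ w.support) :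
    ∃ b1 b2, b1 ≠ b2 ∧ s(v, b1) ∈ w.edges ∧ s(v, b2) ∈ w.edges := by
  classical
  have h3 := hw.three_le_length
  set w' := w.rotate v hv with hw'def
  have hcyc : w'.IsCycle := hw.rotate hv
  have hlen : w'.length = w.length := by
    have h := (Walk.support_rotate w v hv).perm.length_eq
    rwa [support_tail_length, support_tail_length] at h
  refine ⟨w'.getVert 1, w'.getVert (w.length - 1), ?_, ?_, ?_⟩
  · intro h
    have := cyc_getVert_inj hcyc (i := 1) (j := w.length - 1)
      (by omega) (by omega) (by omega) (by omega) h
    omega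
  · have : s(w'.getVert 0, w'.getVert 1) ∈ w'.edges :=
      mem_edges_iff_getVert.mpr ⟨0, by omega, rfl⟩
    rw [getVert_zero] at this
    exact (Walk.rotate_edges w v hv).mem_iff.mp this
  · have : s(w'.getVert (w.length - 1), w'.getVert (w.length - 1 + 1)) ∈ w'.edges :=
      mem_edges_iff_getVert.mpr ⟨w.length - 1, by omega, rfl⟩
    rw [show w.length - 1 + 1 = w'.length from by omega, getVert_length] at this
    rw [Sym2.eq_swap] at this
    exact (Walk.rotate_edges w v hv).mem_iff.mp this

lemma length_ge_of_support_subset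
    {u : V} {c1 c2 : G.Walk u u} (h1 : c1.IsCycle)
    (hshare : ∀ v, v ∈ c1.support → v ∈ c2.support → v = u)
    (hedges : ∀ e, e ∈ G.edgeSet → e ∈ c1.edges ∨ e ∈ c2.edges)
    {a : V} (w : G.Walk a a) (hw : w.IsCycle)
    (hsup : ∀ v ∈ w.support, v ∈ c1.support) :
    c1.length ≤ w.length := by
  classical
  have h3 : 3 ≤ c1.length := h1.three_le_length
  have hw3 : 3 ≤ w.length := hw.three_le_length
  set g := c1.length with hgdef
  have hwe : ∀ e ∈ w.edges, e ∈ c1.edges := by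
    intro e he
    rcases hedges e (w.edges_subset_edgeSet he) with h | h
    · exact h
    · exfalso
      induction e with
      | _ x y =>
        have hx : x = u := hshare x (hsup x (w.fst_mem_support_of_mem_edges he))
          (c2.fst_mem_support_of_mem_edges h)
        have hy : y = u := hshare y (hsup y (w.snd_mem_support_of_mem_edges he))
          (c2.snd_mem_support_of_mem_edges h)
        subst hx hy
        exact G.irrefl (w.adj_of_mem_edges he)
  have hclos : ∀ i, 1 ≤ i → i ≤ g → c1.getVert i ∈ w.support →
      c1.getVert (if i = g then 1 else i+1) ∈ w.support ∧
      c1.getVert (if i = 1 then g else i-1) ∈ w.support := by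
    intro i hi1 hi2 hiw
    obtain ⟨b1, b2, hne, he1, he2⟩ := cycle_two_neighbors hw hiw
    have hb1 := cycle_adj_classify h1 hi1 hi2 (hwe _ he1)
    have hb2 := cycle_adj_classify h1 hi1 hi2 (hwe _ he2)
    have hb1w : b1 ∈ w.support := w.snd_mem_support_of_mem_edges he1
    have hb2w : b2 ∈ w.support := w.snd_mem_support_of_mem_edges he2
    rcases hb1 with h | h <;> rcases hb2 with h' | h'
    · exact absurd (h.trans h'.symm) hne
    · exact ⟨h ▸ hb1w, h' ▸ hb2w⟩
    · exact ⟨h' ▸ hb2w, h ▸ hb1w⟩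
    · exact absurd (h.trans h'.symm) hne
  obtain ⟨i0, hi01, hi0g, hi0⟩ := exists_idx h1 (hsup a w.start_mem_support)
  have hspread : ∀ d, c1.getVert ((i0 - 1 + d) % g + 1) ∈ w.support := by
    intro d
    induction d with
    | zero =>
      rw [Nat.add_zero, Nat.mod_eq_of_lt (by omega), show i0 - 1 + 1 = i0 from by omega, hi0]
      exact w.start_mem_support
    | succ d ih =>
      set m := (i0 - 1 + d) % g with hmdef
      have hm : m < g := Nat.mod_lt _ (by omega)
      have hnext : (i0 - 1 + (d+1)) % g = if m + 1 = g then 0 else m + 1 := by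
        rw [show i0 - 1 + (d+1) = (i0 - 1 + d) + 1 from by omega, Nat.add_mod, ← hmdef,
          Nat.mod_eq_of_lt (show 1 < g from by omega)]
        split_ifs with hc
        · rw [hc, Nat.mod_self]
        · exact Nat.mod_eq_of_lt (by omega)
      have hstep := (hclos (m+1) (by omega) (by omega) ih).1
      rw [hnext]
      split_ifs with hc
      · rwa [if_pos hc] at hstep
      · rwa [if_neg hc] at hstep
  have hcover : ∀ i, 1 ≤ i → i ≤ g → c1.getVert i ∈ w.support := by
    intro i hi1 hi2
    have := hspread (g + i - i0)
    rwa [show i0 - 1 + (g + i - i0) = g + (i - 1) from by omega, Nat.add_mod_left,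
      Nat.mod_eq_of_lt (by omega), show i - 1 + 1 = i from by omega] at this
  have hwnil : ¬ w.Nil := by rw [nil_iff_length_eq]; omega
  have hsub : ∀ v ∈ c1.support.tail, v ∈ w.support.tail := by
    intro v hv
    obtain ⟨i, hi1, hi2, hi⟩ := exists_idx h1 (List.mem_of_mem_tail hv)
    rw [← closed_mem_support_tail_iff hwnil]
    exact hi ▸ hcover i hi1 hi2
  have hnd1 : c1.support.tail.Nodup := h1.2
  calc g = c1.support.tail.length := (support_tail_length c1).symm
    _ = c1.support.tail.toFinset.card := (List.toFinset_card_of_nodup hnd1).symm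
    _ ≤ w.support.tail.toFinset.card := by
        apply Finset.card_le_card
        intro x hx
        rw [List.mem_toFinset] at hx ⊢
        exact hsub x hx
    _ ≤ w.support.tail.length := w.support.tail.toFinset_card_le
    _ = w.length := support_tail_length w

lemma part1 {g : ℕ} (hg : 4 ≤ g) (hge : Even g)
    (G : SimpleGraph V) (u : V) (c1 c2 : G.Walk u u)
    (h1 : c1.IsCycle) (h2 : c2.IsCycle)
    (hl1 : c1.length = g) (hl2 : c2.length = g)
    (hshare : ∀ v, v ∈ c1.support → v ∈ c2.support → v = u)
    (hedges : ∀ e, e ∈ G.edgeSet ↔ e ∈ c1.edges ∨ e ∈ c2.edges) :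
    G.Colorable 2 := by
  classical
  choose idx1 hidx1a hidx1b hidx1c using fun (v : V) (h : v ∈ c1.support) => exists_idx h1 h
  choose idx2 hidx2a hidx2b hidx2c using fun (v : V) (h : v ∈ c2.support) => exists_idx h2 h
  set col : V → ℕ := fun v =>
    (if h : v ∈ c1.support then idx1 v h
     else if h2 : v ∈ c2.support then idx2 v h2 else 0) % 2 with hcol
  have hgmod : g % 2 = 0 := Nat.even_iff.mp hge
  have hcolu : col u = 0 := by
    have hm : u ∈ c1.support := c1.start_mem_support
    have : idx1 u hm = g := by
      have h' : c1.getVert (idx1 u hm) = c1.getVert g := by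
        rw [hidx1c u hm, ← hl1, getVert_length]
      exact cyc_getVert_inj h1 (hidx1a u hm) (hidx1b u hm)
        (by omega) (by rw [hl1]) h'
    simp only [hcol, dif_pos hm, this, hgmod]
  have hval1 : ∀ i, i ≤ g → col (c1.getVert i) = i % 2 := by
    intro i hi
    rcases Nat.eq_zero_or_pos i with rfl | hi1
    · rw [getVert_zero]; simpa using hcolu
    · have hm : c1.getVert i ∈ c1.support := _root_.getVert_mem_support c1 i
      have hidx : idx1 _ hm = i := cyc_getVert_inj h1 (hidx1a _ hm) (hidx1b _ hm)
        hi1 (by omega) (hidx1c _ hm)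
      simp only [hcol, dif_pos hm, hidx]
  have hval2 : ∀ i, i ≤ g → col (c2.getVert i) = i % 2 := by
    intro i hi
    rcases Nat.eq_zero_or_pos i with rfl | hi1
    · rw [getVert_zero]; simpa using hcolu
    · by_cases hm : c2.getVert i ∈ c1.support
      · have hm2 : c2.getVert i ∈ c2.support := _root_.getVert_mem_support c2 i
        have hu : c2.getVert i = u := hshare _ hm hm2
        have : i = g := by
          have h' : c2.getVert i = c2.getVert g := by
            rw [hu, ← hl2, getVert_length]
          exact cyc_getVert_inj h2 hi1 (by omega) (by omega) (by rw [hl2]) h'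
        rw [hu, hcolu, this, hgmod]
      · have hm2 : c2.getVert i ∈ c2.support := _root_.getVert_mem_support c2 i
        have hidx : idx2 _ hm2 = i := cyc_getVert_inj h2 (hidx2a _ hm2) (hidx2b _ hm2)
          hi1 (by omega) (hidx2c _ hm2)
        simp only [hcol, dif_neg hm, dif_pos hm2, hidx]
  have hvalid : ∀ a b : V, G.Adj a b → col a ≠ col b := by
    have key : ∀ (c : G.Walk u u), c.length = g →
        (∀ i, i ≤ g → col (c.getVert i) = i % 2) →
        ∀ a b : V, s(a,b) ∈ c.edges → col a ≠ col b := by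
      intro c hlc hvalc a b he
      obtain ⟨i, hi, hs⟩ := mem_edges_iff_getVert.mp he
      rw [hlc] at hi
      rw [Sym2.eq_iff] at hs
      have hca := hvalc i (by omega)
      have hcb := hvalc (i+1) (by omega)
      rcases hs with ⟨ha, hb⟩ | ⟨ha, hb⟩ <;> subst ha <;> subst hb <;>
        rw [hca, hcb] <;> omega
    intro a b hadj
    rcases (hedges s(a,b)).mp (G.mem_edgeSet.mpr hadj) with he | he
    · exact key c1 hl1 hval1 a b he
    · exact key c2 hl2 hval2 a b he
  refine ⟨SimpleGraph.Coloring.mk (fun v => ⟨col v, ?_⟩) ?_⟩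
  · simp only [hcol]; omega
  · intro a b hadj h
    exact hvalid a b hadj (by simpa using congrArg Fin.val h)

lemma part2 {g : ℕ} (hg : 4 ≤ g)
    (G : SimpleGraph V) (u : V) (c1 c2 : G.Walk u u)
    (h1 : c1.IsCycle) (h2 : c2.IsCycle)
    (hl1 : c1.length = g) (hl2 : c2.length = g)
    (hshare : ∀ v, v ∈ c1.support → v ∈ c2.support → v = u)
    (hedges : ∀ e, e ∈ G.edgeSet ↔ e ∈ c1.edges ∨ e ∈ c2.edges)
    (hverts : ∀ v : V, v ∈ c1.support ∨ v ∈ c2.support) :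
    G.girth = g := by
  classical
  have hshare' : ∀ v, v ∈ c2.support → v ∈ c1.support → v = u :=
    fun v hv2 hv1 => hshare v hv1 hv2
  have hedges' : ∀ e, e ∈ G.edgeSet → e ∈ c1.edges ∨ e ∈ c2.edges :=
    fun e he => (hedges e).mp he
  have hedges'' : ∀ e, e ∈ G.edgeSet → e ∈ c2.edges ∨ e ∈ c1.edges :=
    fun e he => ((hedges e).mp he).symm
  have hle : G.egirth ≤ (g : ℕ∞) := by
    calc G.egirth ≤ ⨅ w : G.Walk u u, ⨅ _ : w.IsCycle, (w.length : ℕ∞) := iInf_le _ u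
      _ ≤ ⨅ _ : c1.IsCycle, (c1.length : ℕ∞) := iInf_le _ c1
      _ ≤ (c1.length : ℕ∞) := iInf_le _ h1
      _ = (g : ℕ∞) := by rw [hl1]
  have hge : (g : ℕ∞) ≤ G.egirth := by
    rw [le_egirth]
    intro a w hw
    by_cases hall : ∀ v ∈ w.support, v ∈ c2.support
    · have := length_ge_of_support_subset h2 hshare' hedges'' w hw hall
      rw [hl2] at this
      exact_mod_cast this
    · push_neg at hall
      obtain ⟨v1, hv1w, hv1n2⟩ := hall
      have hwnil : ¬ w.Nil := hw.not_nil
      set w' := w.rotate v1 hv1w with hw'def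
      have hw' : w'.IsCycle := hw.rotate hv1w
      have hlenr : w'.length = w.length := by
        have h := (Walk.support_rotate w v1 hv1w).perm.length_eq
        rwa [support_tail_length, support_tail_length] at h
      have hsub : ∀ v ∈ w'.support, v ∈ c1.support := by
        apply support_subset_cycle_support hshare hedges' w' hw'
          ((hverts v1).resolve_right hv1n2) hv1n2
      have := length_ge_of_support_subset h1 hshare hedges' w' hw' hsub
      rw [hl1, hlenr] at this
      exact_mod_cast this
  have hegirth : G.egirth = (g : ℕ∞) := le_antisymm hle hge
  rw [SimpleGraph.girth, hegirth]
  simp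

lemma part3 {g : ℕ} (hg : 4 ≤ g) (hge : Even g)
    (G : SimpleGraph V) (u : V) (c1 c2 : G.Walk u u)
    (h1 : c1.IsCycle) (h2 : c2.IsCycle)
    (hl1 : c1.length = g) (hl2 : c2.length = g)
    (hshare : ∀ v, v ∈ c1.support → v ∈ c2.support → v = u)
    (hverts : ∀ v : V, v ∈ c1.support ∨ v ∈ c2.support) :
    ¬ Choosable G 2 := by
  classical
  intro hch
  have hgmod : g % 2 = 0 := Nat.even_iff.mp hge
  choose idx1 hidx1a hidx1b hidx1c using fun (v : V) (h : v ∈ c1.support) => exists_idx h1 h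
  choose idx2 hidx2a hidx2b hidx2c using fun (v : V) (h : v ∈ c2.support) => exists_idx h2 h
  set pat1 : ℕ → Finset ℕ := fun i =>
    if i = g then {1,2} else if i = 1 then {2,3} else if i = g-1 then {1,2} else {1,3}
    with hpat1def
  set pat2 : ℕ → Finset ℕ := fun i =>
    if i = 1 then {1,4} else if i = g-1 then {1,2} else {2,4} with hpat2def
  set L : V → Finset ℕ := fun v =>
    if h : v ∈ c1.support then pat1 (idx1 v h)
    else pat2 (idx2 v ((hverts v).resolve_left h)) with hLdef
  have hcard : ∀ v, (L v).card = 2 := by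
    intro v
    simp only [hLdef, hpat1def, hpat2def]
    split_ifs <;> decide
  obtain ⟨f, hfL, hfp⟩ := hch L hcard
  -- index identification
  have hidxu : idx1 u c1.start_mem_support = g := by
    have h' : c1.getVert (idx1 u c1.start_mem_support) = c1.getVert g := by
      rw [hidx1c, ← hl1, getVert_length]
    exact cyc_getVert_inj h1 (hidx1a _ _) (hidx1b _ _) (by omega) (by rw [hl1]) h'
  have hLu : L u = {1, 2} := by
    simp only [hLdef, dif_pos c1.start_mem_support, hidxu, hpat1def]
    simp
  have hLx : ∀ i, 1 ≤ i → i ≤ g → L (c1.getVert i) = pat1 i := by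
    intro i hi1 hi2
    have hm : c1.getVert i ∈ c1.support := _root_.getVert_mem_support c1 i
    have : idx1 _ hm = i := cyc_getVert_inj h1 (hidx1a _ hm) (hidx1b _ hm)
      hi1 (by omega) (hidx1c _ hm)
    simp only [hLdef, dif_pos hm, this]
  have hLy : ∀ i, 1 ≤ i → i ≤ g - 1 → L (c2.getVert i) = pat2 i := by
    intro i hi1 hi2
    have hm2 : c2.getVert i ∈ c2.support := _root_.getVert_mem_support c2 i
    have hm : c2.getVert i ∉ c1.support := by
      intro hm
      have hu : c2.getVert i = u := hshare _ hm hm2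
      have h' : c2.getVert i = c2.getVert g := by rw [hu, ← hl2, getVert_length]
      have := cyc_getVert_inj h2 hi1 (by omega) (by omega) (by rw [hl2]) h'
      omega
    have : idx2 _ ((hverts _).resolve_left hm) = i :=
      cyc_getVert_inj h2 (hidx2a _ _) (hidx2b _ _) hi1 (by omega) (hidx2c _ _)
    simp only [hLdef, dif_neg hm, this]
  have hadj1 : ∀ i, i < g → G.Adj (c1.getVert i) (c1.getVert (i+1)) :=
    fun i hi => c1.adj_getVert_succ (by omega)
  have hadj2 : ∀ i, i < g → G.Adj (c2.getVert i) (c2.getVert (i+1)) :=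
    fun i hi => c2.adj_getVert_succ (by omega)
  have hfu : f u = 1 ∨ f u = 2 := by
    have := hfL u
    rw [hLu] at this
    simpa using this
  -- pattern values
  have hpat11 : pat1 1 = {2,3} := by
    simp only [hpat1def]
    rw [if_neg (show ¬(1 = g) from by omega)]
    simp
  have hpat1mid : ∀ i, 2 ≤ i → i ≤ g - 2 → pat1 i = {1,3} := by
    intro i hi1 hi2
    simp only [hpat1def]
    rw [if_neg (by omega), if_neg (by omega), if_neg (by omega)]
  have hpat1g1 : pat1 (g-1) = {1,2} := by
    simp only [hpat1def]
    rw [if_neg (show ¬(g-1 = g) from by omega), if_neg (show ¬(g-1 = 1) from by omega)]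
    simp
  have hpat21 : pat2 1 = {1,4} := by
    simp only [hpat2def]; simp
  have hpat2mid : ∀ i, 2 ≤ i → i ≤ g - 2 → pat2 i = {2,4} := by
    intro i hi1 hi2
    simp only [hpat2def]
    rw [if_neg (by omega), if_neg (by omega)]
  have hpat2g1 : pat2 (g-1) = {1,2} := by
    simp only [hpat2def]
    rw [if_neg (show ¬(g-1 = 1) from by omega)]
    simp
  rcases hfu with hfu | hfu
  · -- f u = 1 : contradiction along c2
    have key : ∀ i, 1 ≤ i → i ≤ g - 2 →
        f (c2.getVert i) = if i % 2 = 1 then 4 else 2 := by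
      intro i
      induction i with
      | zero => omega
      | succ n ih =>
        intro hn1 hn2
        rcases Nat.eq_zero_or_pos n with rfl | hn
        · have hm := hfL (c2.getVert 1)
          rw [hLy 1 (by omega) (by omega), hpat21] at hm
          simp only [Finset.mem_insert, Finset.mem_singleton] at hm
          have hadj := hadj2 0 (by omega)
          rw [getVert_zero] at hadj
          have hne := hfp _ _ hadj
          rw [hfu] at hne
          simp only [Nat.zero_add] at hne
          rw [if_pos (show (0+1) % 2 = 1 from rfl)]
          simp only [Nat.zero_add]
          omega
        · have ihn := ih (by omega) (by omega)
          have hm := hfL (c2.getVert (n+1))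
          rw [hLy (n+1) (by omega) (by omega), hpat2mid (n+1) (by omega) (by omega)] at hm
          simp only [Finset.mem_insert, Finset.mem_singleton] at hm
          have hne := hfp _ _ (hadj2 n (by omega))
          split_ifs at ihn ⊢ <;> omega
    have hfg2 : f (c2.getVert (g-2)) = 2 := by
      rw [key (g-2) (by omega) (by omega), if_neg (by omega)]
    have hm := hfL (c2.getVert (g-1))
    rw [hLy (g-1) (by omega) (by omega), hpat2g1] at hm
    simp only [Finset.mem_insert, Finset.mem_singleton] at hm
    have hne1 := hfp _ _ (by
      have := hadj2 (g-2) (by omega)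
      rwa [show g - 2 + 1 = g - 1 from by omega] at this)
    have hne2 := hfp _ _ (by
      have := hadj2 (g-1) (by omega)
      rwa [show g - 1 + 1 = g from by omega,
        show c2.getVert g = u from by rw [← hl2]; exact getVert_length c2] at this)
    rw [hfu] at hne2
    omega
  · -- f u = 2 : contradiction along c1
    have key : ∀ i, 1 ≤ i → i ≤ g - 2 →
        f (c1.getVert i) = if i % 2 = 1 then 3 else 1 := by
      intro i
      induction i with
      | zero => omega
      | succ n ih =>
        intro hn1 hn2
        rcases Nat.eq_zero_or_pos n with rfl | hn
        · have hm := hfL (c1.getVert 1)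
          rw [hLx 1 (by omega) (by omega), hpat11] at hm
          simp only [Finset.mem_insert, Finset.mem_singleton] at hm
          have hadj := hadj1 0 (by omega)
          rw [getVert_zero] at hadj
          have hne := hfp _ _ hadj
          rw [hfu] at hne
          simp only [Nat.zero_add] at hne
          rw [if_pos (show (0+1) % 2 = 1 from rfl)]
          simp only [Nat.zero_add]
          omega
        · have ihn := ih (by omega) (by omega)
          have hm := hfL (c1.getVert (n+1))
          rw [hLx (n+1) (by omega) (by omega), hpat1mid (n+1) (by omega) (by omega)] at hm
          simp only [Finset.mem_insert, Finset.mem_singleton] at hm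
          have hne := hfp _ _ (hadj1 n (by omega))
          split_ifs at ihn ⊢ <;> omega
    have hfg2 : f (c1.getVert (g-2)) = 1 := by
      rw [key (g-2) (by omega) (by omega), if_neg (by omega)]
    have hm := hfL (c1.getVert (g-1))
    rw [hLx (g-1) (by omega) (by omega), hpat1g1] at hm
    simp only [Finset.mem_insert, Finset.mem_singleton] at hm
    have hne1 := hfp _ _ (by
      have := hadj1 (g-2) (by omega)
      rwa [show g - 2 + 1 = g - 1 from by omega] at this)
    have hne2 := hfp _ _ (by
      have := hadj1 (g-1) (by omega)
      rwa [show g - 1 + 1 = g from by omega,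
        show c1.getVert g = u from by rw [← hl1]; exact getVert_length c1] at this)
    rw [hfu] at hne2
    omega

lemma card_bound [Fintype V] {g : ℕ} (hg : 4 ≤ g)
    {G : SimpleGraph V} {u : V} {c1 c2 : G.Walk u u}
    (h1 : c1.IsCycle) (h2 : c2.IsCycle)
    (hl1 : c1.length = g) (hl2 : c2.length = g)
    (hshare : ∀ v, v ∈ c1.support → v ∈ c2.support → v = u)
    (hedges : ∀ e, e ∈ G.edgeSet → e ∈ c1.edges ∨ e ∈ c2.edges)
    (H : G.Subgraph) {e0 : Sym2 V} (he0 : e0 ∈ c1.edges) (he0H : e0 ∉ H.edgeSet) :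
    H.edgeSet.ncard ≤ H.verts.ncard := by
  classical
  -- injectivity of getVert on [0, g)
  have inj0 : ∀ {c : G.Walk u u}, c.IsCycle → c.length = g →
      ∀ i j, i < g → j < g → c.getVert i = c.getVert j → i = j := by
    intro c hc hlc i j hi hj hij
    have h0g : c.getVert 0 = c.getVert g := by
      rw [getVert_zero, ← hlc, getVert_length]
    rcases Nat.eq_zero_or_pos i with rfl | hi1 <;> rcases Nat.eq_zero_or_pos j with rfl | hj1
    · rfl
    · rw [h0g] at hij
      have := cyc_getVert_inj hc (by omega) (by rw [hlc]) hj1 (by omega) hij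
      omega
    · rw [h0g] at hij
      have := cyc_getVert_inj hc hi1 (by omega) (by omega) (by rw [hlc]) hij
      omega
    · exact cyc_getVert_inj hc hi1 (by omega) hj1 (by omega) hij
  -- uniqueness of edge index
  have eidxu : ∀ {c : G.Walk u u}, c.IsCycle → c.length = g →
      ∀ i j, i < g → j < g →
      s(c.getVert i, c.getVert (i+1)) = s(c.getVert j, c.getVert (j+1)) → i = j := by
    intro c hc hlc i j hi hj hs
    have h0g : c.getVert 0 = c.getVert g := by
      rw [getVert_zero, ← hlc, getVert_length]
    rw [Sym2.eq_iff] at hs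
    rcases hs with ⟨ha, _⟩ | ⟨ha, hb⟩
    · exact inj0 hc hlc i j hi hj ha
    · -- cross case: impossible
      exfalso
      rcases Nat.lt_or_ge (j+1) g with hjg | hjg
      · have hij : i = j + 1 := inj0 hc hlc i (j+1) hi hjg ha
        rcases Nat.lt_or_ge (i+1) g with hig | hig
        · have := inj0 hc hlc (i+1) j hig hj hb
          omega
        · have hig' : i + 1 = g := by omega
          rw [hig', ← h0g] at hb
          have := inj0 hc hlc 0 j (by omega) hj hb
          omega
      · have hjg' : j + 1 = g := by omega
        rw [hjg', ← h0g] at ha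
        have hi0 : i = 0 := inj0 hc hlc i 0 hi (by omega) ha
        subst hi0
        have := inj0 hc hlc 1 j (by omega) hj hb
        omega
  choose eidx1 heidx1lt heidx1s using fun (e : Sym2 V) (h : e ∈ c1.edges) =>
    mem_edges_iff_getVert.mp h
  choose eidx2 heidx2lt heidx2s using fun (e : Sym2 V) (h : e ∈ c2.edges) =>
    mem_edges_iff_getVert.mp h
  set k := eidx1 e0 he0 with hkdef
  have hkg : k < g := by rw [← hl1]; exact heidx1lt e0 he0
  set F : Sym2 V → V := fun e =>
    if h : e ∈ c1.edges then
      (if eidx1 e h < k then c1.getVert (eidx1 e h + 1) else c1.getVert (eidx1 e h))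
    else if h2 : e ∈ c2.edges then c2.getVert (eidx2 e h2 + 1) else u
    with hFdef
  -- membership of H-edge endpoints
  have hHv : ∀ e ∈ H.edgeSet, ∀ i, i < g →
      (e ∈ c1.edges → s(c1.getVert i, c1.getVert (i+1)) = e →
        c1.getVert i ∈ H.verts ∧ c1.getVert (i+1) ∈ H.verts) := by
    intro e he i _ _ hs
    rw [← hs, Subgraph.mem_edgeSet] at he
    exact ⟨H.edge_vert he, H.edge_vert he.symm⟩
  have hHv2 : ∀ e ∈ H.edgeSet, ∀ i, i < g →
      (e ∈ c2.edges → s(c2.getVert i, c2.getVert (i+1)) = e →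
        c2.getVert i ∈ H.verts ∧ c2.getVert (i+1) ∈ H.verts) := by
    intro e he i _ _ hs
    rw [← hs, Subgraph.mem_edgeSet] at he
    exact ⟨H.edge_vert he, H.edge_vert he.symm⟩
  have hne0 : ∀ e ∈ H.edgeSet, ∀ (h : e ∈ c1.edges), eidx1 e h ≠ k := by
    intro e he h hk
    apply he0H
    have : e = e0 := by
      rw [← heidx1s e h, ← heidx1s e0 he0, hk]
    exact this ▸ he
  have hmaps : ∀ e ∈ H.edgeSet, F e ∈ H.verts := by
    intro e he
    by_cases h : e ∈ c1.edges
    · have hlt : eidx1 e h < g := by rw [← hl1]; exact heidx1lt e h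
      have hend := hHv e he (eidx1 e h) hlt h (heidx1s e h)
      simp only [hFdef, dif_pos h]
      split_ifs with hc
      · exact hend.2
      · exact hend.1
    · have h2e : e ∈ c2.edges := (hedges e (H.edgeSet_subset he)).resolve_left h
      have hlt : eidx2 e h2e < g := by rw [← hl2]; exact heidx2lt e h2e
      have hend := hHv2 e he (eidx2 e h2e) hlt h2e (heidx2s e h2e)
      simp only [hFdef, dif_neg h, dif_pos h2e]
      exact hend.2
  have hinj : Set.InjOn F H.edgeSet := by
    intro e he e' he' heq
    by_cases h : e ∈ c1.edges <;> by_cases h' : e' ∈ c1.edges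
    · -- both in c1
      set i := eidx1 e h with hidef
      set i' := eidx1 e' h' with hi'def
      have hig : i < g := by rw [← hl1]; exact heidx1lt e h
      have hi'g : i' < g := by rw [← hl1]; exact heidx1lt e' h'
      have hik : i ≠ k := hne0 e he h
      have hi'k : i' ≠ k := hne0 e' he' h'
      simp only [hFdef, dif_pos h, dif_pos h'] at heq
      have hii' : i = i' := by
        split_ifs at heq with hc hc' hc'
        · have := inj0 h1 hl1 (i+1) (i'+1) (by omega) (by omega) heq; omega
        · have := inj0 h1 hl1 (i+1) i' (by omega) (by omega) heq; omega
        · have := inj0 h1 hl1 i (i'+1) (by omega) (by omega) heq; omega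
        · exact inj0 h1 hl1 i i' (by omega) (by omega) heq
      rw [← heidx1s e h, ← heidx1s e' h', ← hidef, ← hi'def, hii']
    · -- e in c1, e' in c2 : impossible
      exfalso
      have h2e' : e' ∈ c2.edges := (hedges e' (H.edgeSet_subset he')).resolve_left h'
      set i := eidx1 e h with hidef
      have hig : i < g := by rw [← hl1]; exact heidx1lt e h
      have hik : i ≠ k := hne0 e he h
      have hj'g : eidx2 e' h2e' < g := by rw [← hl2]; exact heidx2lt e' h2e'
      simp only [hFdef, dif_pos h, dif_neg h', dif_pos h2e'] at heq
      have hxy : ∃ t, 1 ≤ t ∧ t ≤ g - 1 ∧ c1.getVert t = c2.getVert (eidx2 e' h2e' + 1) := by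
        split_ifs at heq with hc
        · exact ⟨i+1, by omega, by omega, heq⟩
        · refine ⟨i, by omega, by omega, heq⟩
      obtain ⟨t, ht1, ht2, hts⟩ := hxy
      have hu1 : c1.getVert t = u := hshare _ (_root_.getVert_mem_support c1 t)
        (hts ▸ _root_.getVert_mem_support c2 (eidx2 e' h2e' + 1))
      have : t = g := by
        have h' : c1.getVert t = c1.getVert g := by rw [hu1, ← hl1, getVert_length]
        exact cyc_getVert_inj h1 ht1 (by omega) (by omega) (by rw [hl1]) h'
      omega
    · -- e in c2, e' in c1 : symmetric, impossible
      exfalso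
      have h2e : e ∈ c2.edges := (hedges e (H.edgeSet_subset he)).resolve_left h
      set i' := eidx1 e' h' with hi'def
      have hi'g : i' < g := by rw [← hl1]; exact heidx1lt e' h'
      have hi'k : i' ≠ k := hne0 e' he' h'
      have hjg : eidx2 e h2e < g := by rw [← hl2]; exact heidx2lt e h2e
      simp only [hFdef, dif_pos h', dif_neg h, dif_pos h2e] at heq
      have hxy : ∃ t, 1 ≤ t ∧ t ≤ g - 1 ∧ c1.getVert t = c2.getVert (eidx2 e h2e + 1) := by
        split_ifs at heq with hc
        · exact ⟨i'+1, by omega, by omega, heq.symm⟩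
        · exact ⟨i', by omega, by omega, heq.symm⟩
      obtain ⟨t, ht1, ht2, hts⟩ := hxy
      have hu1 : c1.getVert t = u := hshare _ (_root_.getVert_mem_support c1 t)
        (hts ▸ _root_.getVert_mem_support c2 (eidx2 e h2e + 1))
      have : t = g := by
        have hh : c1.getVert t = c1.getVert g := by rw [hu1, ← hl1, getVert_length]
        exact cyc_getVert_inj h1 ht1 (by omega) (by omega) (by rw [hl1]) hh
      omega
    · -- both in c2
      have h2e : e ∈ c2.edges := (hedges e (H.edgeSet_subset he)).resolve_left h
      have h2e' : e' ∈ c2.edges := (hedges e' (H.edgeSet_subset he')).resolve_left h'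
      have hjg : eidx2 e h2e < g := by rw [← hl2]; exact heidx2lt e h2e
      have hj'g : eidx2 e' h2e' < g := by rw [← hl2]; exact heidx2lt e' h2e'
      simp only [hFdef, dif_neg h, dif_neg h', dif_pos h2e, dif_pos h2e'] at heq
      have := cyc_getVert_inj h2 (i := eidx2 e h2e + 1) (j := eidx2 e' h2e' + 1)
        (by omega) (by omega) (by omega) (by omega) heq
      rw [← heidx2s e h2e, ← heidx2s e' h2e']
      rw [show eidx2 e h2e = eidx2 e' h2e' from by omega]
  exact Set.ncard_le_ncard_of_injOn F hmaps hinj H.verts.toFinite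

lemma part4 [Fintype V] {g : ℕ} (hg : 4 ≤ g)
    (G : SimpleGraph V) (u : V) (c1 c2 : G.Walk u u)
    (h1 : c1.IsCycle) (h2 : c2.IsCycle)
    (hl1 : c1.length = g) (hl2 : c2.length = g)
    (hshare : ∀ v, v ∈ c1.support → v ∈ c2.support → v = u)
    (hedges : ∀ e, e ∈ G.edgeSet ↔ e ∈ c1.edges ∨ e ∈ c2.edges)
    (hverts : ∀ v : V, v ∈ c1.support ∨ v ∈ c2.support) :
    ∀ H : G.Subgraph, H ≠ ⊤ →
      (2 * H.edgeSet.ncard : ℝ) / H.verts.ncard ≤ 2 := by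
  classical
  intro H hH
  have hmiss : ∃ e, (e ∈ c1.edges ∨ e ∈ c2.edges) ∧ e ∉ H.edgeSet := by
    by_contra hcon
    push_neg at hcon
    apply hH
    have hAdj : ∀ a b, G.Adj a b ↔ H.Adj a b := by
      intro a b
      constructor
      · intro hab
        have := hcon s(a,b) ((hedges _).mp (G.mem_edgeSet.mpr hab))
        rwa [Subgraph.mem_edgeSet] at this
      · exact fun hab => H.adj_sub hab
    have hV : ∀ v : V, v ∈ H.verts := by
      intro v
      have hex : ∃ (c : G.Walk u u), c.IsCycle ∧ v ∈ c.support := by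
        rcases hverts v with h | h
        exacts [⟨c1, h1, h⟩, ⟨c2, h2, h⟩]
      obtain ⟨c, hc, hvc⟩ := hex
      obtain ⟨i, hi1, hi2, hi⟩ := exists_idx hc hvc
      have hadj : G.Adj (c.getVert (i-1)) (c.getVert i) := by
        have := c.adj_getVert_succ (i := i-1) (by omega)
        rwa [show i - 1 + 1 = i from by omega] at this
      have := (hAdj _ _).mp hadj
      exact hi ▸ H.edge_vert this.symm
    refine Subgraph.ext ?_ ?_
    · rw [Subgraph.verts_top]
      exact Set.eq_univ_of_forall hV
    · funext a b
      exact propext ⟨fun h => H.adj_sub h, fun h => (hAdj a b).mp h⟩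
  obtain ⟨e, hec, heH⟩ := hmiss
  have hEV : H.edgeSet.ncard ≤ H.verts.ncard := by
    rcases hec with hec | hec
    · exact card_bound hg h1 h2 hl1 hl2 hshare (fun e he => (hedges e).mp he) H hec heH
    · exact card_bound hg h2 h1 hl2 hl1 (fun v a b => hshare v b a)
        (fun e he => ((hedges e).mp he).symm) H hec heH
  rcases Nat.eq_zero_or_pos H.verts.ncard with h0 | hpos
  · rw [h0]
    norm_num
  · rw [div_le_iff₀ (by exact_mod_cast hpos)]
    push_cast
    have : (H.edgeSet.ncard : ℝ) ≤ H.verts.ncard := by exact_mod_cast hEV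
    linarith

/-- The graph consisting of two cycles of even length g ≥ 4 sharing exactly one
vertex is bipartite, has girth g, is not 2-choosable, and every proper subgraph
has average degree at most 2. -/
theorem stmt_7 {V : Type} [Fintype V] (g : ℕ) (hg : 4 ≤ g) (hge : Even g)
    (G : SimpleGraph V) (u : V) (c1 c2 : G.Walk u u)
    (h1 : c1.IsCycle) (h2 : c2.IsCycle)
    (hl1 : c1.length = g) (hl2 : c2.length = g)
    (hshare : ∀ v, v ∈ c1.support → v ∈ c2.support → v = u)
    (hedges : ∀ e, e ∈ G.edgeSet ↔ e ∈ c1.edges ∨ e ∈ c2.edges)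
    (hverts : ∀ v : V, v ∈ c1.support ∨ v ∈ c2.support) :
    G.Colorable 2 ∧ G.girth = g ∧ ¬ Choosable G 2 ∧
    ∀ H : G.Subgraph, H ≠ ⊤ →
      (2 * H.edgeSet.ncard : ℝ) / H.verts.ncard ≤ 2 := by
  exact ⟨part1 hg hge G u c1 c2 h1 h2 hl1 hl2 hshare hedges,
    part2 hg G u c1 c2 h1 h2 hl1 hl2 hshare hedges hverts,
    part3 hg hge G u c1 c2 h1 h2 hl1 hl2 hshare hverts,
    part4 hg G u c1 c2 h1 h2 hl1 hl2 hshare hedges hverts⟩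
end

section
/- Let G be the graph consisting of two cycles of even length g ≥ 4 sharing exactly one vertex. Then there is an assignment L of lists of size 2 to the vertices of G such that G has no proper coloring chosen from L. Moreover, when g ≡ 4 (mod 6), the lists can be chosen so that adjacent lists intersect in exactly one color. -/
namespace ListAux

variable {V : Type} {G : SimpleGraph V}

lemma support_getElem_eq_getVert {a b : V} (w : G.Walk a b) :
    ∀ (i : ℕ) (h : i < w.support.length), w.support[i] = w.getVert i := by
  induction w with
  | nil =>
    intro i h
    simp only [SimpleGraph.Walk.support_nil, List.length_singleton] at h
    interval_cases i
    simp
  | cons hadj p ih =>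
    intro i h
    cases i with
    | zero => simp
    | succ n =>
      simp only [SimpleGraph.Walk.support_cons, List.getElem_cons_succ,
        SimpleGraph.Walk.getVert_cons_succ]
      exact ih n (by simpa [SimpleGraph.Walk.length_support] using
        (by simpa [SimpleGraph.Walk.support_cons] using h : n + 1 < p.support.length + 1))

lemma edges_decomp {a b : V} (w : G.Walk a b) :
    ∀ e ∈ w.edges, ∃ i, i < w.length ∧ e = s(w.getVert i, w.getVert (i+1)) := by
  induction w with
  | nil => intro e he; simp at he
  | cons hadj p ih =>
    intro e he
    rw [SimpleGraph.Walk.edges_cons, List.mem_cons] at he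
    rcases he with he | he
    · exact ⟨0, by simp, by simpa using he⟩
    · obtain ⟨i, hi, hei⟩ := ih e he
      exact ⟨i + 1, by simp; omega, by simpa [SimpleGraph.Walk.getVert_cons_succ] using hei⟩

lemma cycle_getVert_injOn {u : V} (w : G.Walk u u) (hw : w.IsCycle)
    {i j : ℕ} (hi1 : 1 ≤ i) (hi2 : i ≤ w.length) (hj1 : 1 ≤ j) (hj2 : j ≤ w.length)
    (h : w.getVert i = w.getVert j) : i = j := by
  have hnd := hw.support_nodup
  have hlen : w.support.length = w.length + 1 := w.length_support
  have htl : w.support.tail.length = w.length := by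
    rw [w.support_eq_cons] at hlen; simpa using hlen
  have hget : ∀ (k : ℕ) (hk1 : 1 ≤ k) (hk2 : k ≤ w.length),
      w.support.tail[k-1]'(by omega) = w.getVert k := by
    intro k hk1 hk2
    obtain ⟨m, rfl⟩ : ∃ m, k = m + 1 := ⟨k - 1, by omega⟩
    simp only [Nat.add_sub_cancel]
    rw [List.getElem_tail]
    exact support_getElem_eq_getVert w (m+1) (by omega)
  have e1 := hget i hi1 hi2
  have e2 := hget j hj1 hj2
  have key : i - 1 = j - 1 := (hnd.getElem_inj_iff
    (hi := by omega) (hj := by omega)).mp (by rw [e1, e2, h])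
  omega

lemma cycle_getVert_ne {u : V} (w : G.Walk u u) (hw : w.IsCycle)
    {i : ℕ} (hi1 : 1 ≤ i) (hi2 : i ≤ w.length - 1) : w.getVert i ≠ u := by
  intro h
  have h3 := hw.three_le_length
  have : w.getVert i = w.getVert w.length := by rw [h, w.getVert_length]
  have := cycle_getVert_injOn w hw hi1 (by omega) (by omega) le_rfl this
  omega

lemma mem_support_decomp {u : V} (w : G.Walk u u) (hw : w.IsCycle)
    {v : V} (hv : v ∈ w.support) (hvu : v ≠ u) :
    ∃ i, 1 ≤ i ∧ i ≤ w.length - 1 ∧ w.getVert i = v := by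
  rw [SimpleGraph.Walk.mem_support_iff_exists_getVert] at hv
  obtain ⟨n, hn, hnl⟩ := hv
  have h3 := hw.three_le_length
  have h0 : n ≠ 0 := by rintro rfl; exact hvu (by simpa using hn.symm)
  have hL : n ≠ w.length := by rintro rfl; exact hvu (by rw [← hn, w.getVert_length])
  exact ⟨n, by omega, by omega, hn⟩

lemma chain {u : V} {g : ℕ} (hg : 1 ≤ g)
    (w : G.Walk u u) (hl : w.length = g) (t : ℕ → ℕ) (L : V → Finset ℕ)
    (hL : ∀ i, 1 ≤ i → i ≤ g - 1 → L (w.getVert i) = {t (i - 1), t i})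
    (hend : t (g - 1) = t 0)
    (f : V → ℕ) (hf : ∀ v, f v ∈ L v)
    (hfa : ∀ a b, G.Adj a b → f a ≠ f b)
    (h0 : f u = t 0) : False := by
  have claim : ∀ i, i ≤ g - 1 → f (w.getVert i) = t i := by
    intro i
    induction i with
    | zero => intro _; simpa [w.getVert_zero] using h0
    | succ n ih =>
      intro hn
      have h1 := ih (by omega)
      have hadj : G.Adj (w.getVert n) (w.getVert (n+1)) :=
        w.adj_getVert_succ (by omega)
      have hm : f (w.getVert (n+1)) ∈ ({t n, t (n+1)} : Finset ℕ) := by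
        have hLL := hL (n+1) (by omega) hn
        have := hf (w.getVert (n+1))
        rw [hLL] at this
        simpa using this
      have hne := hfa _ _ hadj
      rw [h1] at hne
      rcases Finset.mem_insert.mp hm with h | h
      · exact absurd h.symm hne
      · simpa using h
  have hlast := claim (g-1) le_rfl
  have hadj : G.Adj (w.getVert (g-1)) (w.getVert (g-1+1)) :=
    w.adj_getVert_succ (by omega)
  rw [show g - 1 + 1 = g by omega] at hadj
  have hgu : w.getVert g = u := by rw [← hl, w.getVert_length]
  rw [hgu] at hadj
  exact hfa _ _ hadj (by rw [hlast, hend, h0])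

lemma pair_inter (p q r : ℕ) (hpq : p ≠ q) (hqr : q ≠ r) (hpr : p ≠ r) :
    (({p, q} : Finset ℕ) ∩ {q, r}).card = 1 := by
  have : (({p, q} : Finset ℕ) ∩ {q, r}) = {q} := by
    ext x
    simp only [Finset.mem_inter, Finset.mem_insert, Finset.mem_singleton]
    constructor
    · rintro ⟨h1 | h1, h2 | h2⟩ <;> omega
    · rintro rfl; exact ⟨Or.inr rfl, Or.inl rfl⟩
  rw [this, Finset.card_singleton]


/-- rotating list pattern -/
def tR (c0 : ℕ) : ℕ → ℕ := fun i => if i % 3 = 0 then c0 else if i % 3 = 1 then 3 else 4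

lemma build {u : V} {g : ℕ} (hg : 4 ≤ g)
    (c1 c2 : G.Walk u u) (h1 : c1.IsCycle) (h2 : c2.IsCycle)
    (hl1 : c1.length = g) (hl2 : c2.length = g)
    (hshare : ∀ v, v ∈ c1.support → v ∈ c2.support → v = u)
    (hverts : ∀ v : V, v ∈ c1.support ∨ v ∈ c2.support)
    (t1 t2 : ℕ → ℕ) (hne : t1 0 ≠ t2 0)
    (hstep1 : ∀ i, 1 ≤ i → i ≤ g - 1 → t1 (i-1) ≠ t1 i)
    (hstep2 : ∀ i, 1 ≤ i → i ≤ g - 1 → t2 (i-1) ≠ t2 i)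
    (hend1 : t1 (g-1) = t1 0) (hend2 : t2 (g-1) = t2 0) :
    ∃ L : V → Finset ℕ,
      L u = {t1 0, t2 0} ∧
      (∀ i, 1 ≤ i → i ≤ g - 1 → L (c1.getVert i) = {t1 (i-1), t1 i}) ∧
      (∀ i, 1 ≤ i → i ≤ g - 1 → L (c2.getVert i) = {t2 (i-1), t2 i}) ∧
      (∀ v, (L v).card = 2) ∧
      ¬∃ f : V → ℕ, (∀ v, f v ∈ L v) ∧ ∀ a b, G.Adj a b → f a ≠ f b := by
  classical
  refine ⟨fun v =>
    if hvu : v = u then {t1 0, t2 0}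
    else if hv : v ∈ c1.support then
      {t1 ((mem_support_decomp c1 h1 hv hvu).choose - 1),
       t1 ((mem_support_decomp c1 h1 hv hvu).choose)}
    else
      {t2 ((mem_support_decomp c2 h2 ((hverts v).resolve_left hv) hvu).choose - 1),
       t2 ((mem_support_decomp c2 h2 ((hverts v).resolve_left hv) hvu).choose)},
    ?_, ?_, ?_, ?_, ?_⟩
  · beta_reduce
    rw [dif_pos rfl]
  · -- P1
    intro i hi1 hi2
    have hvu : c1.getVert i ≠ u := cycle_getVert_ne c1 h1 hi1 (by omega)
    have hv : c1.getVert i ∈ c1.support := by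
      rw [SimpleGraph.Walk.mem_support_iff_exists_getVert]
      exact ⟨i, rfl, by omega⟩
    beta_reduce
    rw [dif_neg hvu, dif_pos hv]
    obtain ⟨hj1, hj2, hj3⟩ := (mem_support_decomp c1 h1 hv hvu).choose_spec
    have hji : (mem_support_decomp c1 h1 hv hvu).choose = i :=
      cycle_getVert_injOn c1 h1 hj1 (by omega) hi1 (by omega) hj3
    rw [hji]
  · -- P2
    intro i hi1 hi2
    have hvu : c2.getVert i ≠ u := cycle_getVert_ne c2 h2 hi1 (by omega)
    have hv2 : c2.getVert i ∈ c2.support := by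
      rw [SimpleGraph.Walk.mem_support_iff_exists_getVert]
      exact ⟨i, rfl, by omega⟩
    have hv : c2.getVert i ∉ c1.support := fun hmem => hvu (hshare _ hmem hv2)
    beta_reduce
    rw [dif_neg hvu, dif_neg hv]
    obtain ⟨hj1, hj2, hj3⟩ :=
      (mem_support_decomp c2 h2 ((hverts _).resolve_left hv) hvu).choose_spec
    have hji : (mem_support_decomp c2 h2 ((hverts _).resolve_left hv) hvu).choose = i :=
      cycle_getVert_injOn c2 h2 hj1 (by omega) hi1 (by omega) hj3
    rw [hji]
  · -- card
    intro v
    beta_reduce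
    by_cases hvu : v = u
    · rw [dif_pos hvu]; exact Finset.card_pair hne
    · rw [dif_neg hvu]
      by_cases hv : v ∈ c1.support
      · rw [dif_pos hv]
        obtain ⟨hj1, hj2, hj3⟩ := (mem_support_decomp c1 h1 hv hvu).choose_spec
        exact Finset.card_pair (hstep1 _ hj1 (by omega))
      · rw [dif_neg hv]
        obtain ⟨hj1, hj2, hj3⟩ :=
          (mem_support_decomp c2 h2 ((hverts v).resolve_left hv) hvu).choose_spec
        exact Finset.card_pair (hstep2 _ hj1 (by omega))
  · -- no coloring
    rintro ⟨f, hf, hfa⟩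
    have hfu : f u ∈ ({t1 0, t2 0} : Finset ℕ) := by
      have := hf u
      beta_reduce at this
      rwa [dif_pos rfl] at this
    have hL1 : ∀ i, 1 ≤ i → i ≤ g - 1 →
        (fun v => if hvu : v = u then ({t1 0, t2 0} : Finset ℕ)
          else if hv : v ∈ c1.support then
            {t1 ((mem_support_decomp c1 h1 hv hvu).choose - 1),
             t1 ((mem_support_decomp c1 h1 hv hvu).choose)}
          else
            {t2 ((mem_support_decomp c2 h2 ((hverts v).resolve_left hv) hvu).choose - 1),
             t2 ((mem_support_decomp c2 h2 ((hverts v).resolve_left hv) hvu).choose)})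
          (c1.getVert i) = {t1 (i-1), t1 i} := by
      intro i hi1 hi2
      have hvu : c1.getVert i ≠ u := cycle_getVert_ne c1 h1 hi1 (by omega)
      have hv : c1.getVert i ∈ c1.support := by
        rw [SimpleGraph.Walk.mem_support_iff_exists_getVert]
        exact ⟨i, rfl, by omega⟩
      simp only [dif_neg hvu, dif_pos hv]
      obtain ⟨hj1, hj2, hj3⟩ := (mem_support_decomp c1 h1 hv hvu).choose_spec
      have hji : (mem_support_decomp c1 h1 hv hvu).choose = i :=
        cycle_getVert_injOn c1 h1 hj1 (by omega) hi1 (by omega) hj3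
      rw [hji]
    have hL2 : ∀ i, 1 ≤ i → i ≤ g - 1 →
        (fun v => if hvu : v = u then ({t1 0, t2 0} : Finset ℕ)
          else if hv : v ∈ c1.support then
            {t1 ((mem_support_decomp c1 h1 hv hvu).choose - 1),
             t1 ((mem_support_decomp c1 h1 hv hvu).choose)}
          else
            {t2 ((mem_support_decomp c2 h2 ((hverts v).resolve_left hv) hvu).choose - 1),
             t2 ((mem_support_decomp c2 h2 ((hverts v).resolve_left hv) hvu).choose)})
          (c2.getVert i) = {t2 (i-1), t2 i} := by
      intro i hi1 hi2
      have hvu : c2.getVert i ≠ u := cycle_getVert_ne c2 h2 hi1 (by omega)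
      have hv2 : c2.getVert i ∈ c2.support := by
        rw [SimpleGraph.Walk.mem_support_iff_exists_getVert]
        exact ⟨i, rfl, by omega⟩
      have hv : c2.getVert i ∉ c1.support := fun hmem => hvu (hshare _ hmem hv2)
      simp only [dif_neg hvu, dif_neg hv]
      obtain ⟨hj1, hj2, hj3⟩ :=
        (mem_support_decomp c2 h2 ((hverts _).resolve_left hv) hvu).choose_spec
      have hji : (mem_support_decomp c2 h2 ((hverts _).resolve_left hv) hvu).choose = i :=
        cycle_getVert_injOn c2 h2 hj1 (by omega) hi1 (by omega) hj3
      rw [hji]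
    rcases Finset.mem_insert.mp hfu with h | h
    · exact chain (by omega) c1 hl1 t1 _ hL1 hend1 f hf hfa h
    · exact chain (by omega) c2 hl2 t2 _ hL2 hend2 f hf hfa (Finset.mem_singleton.mp h)


lemma inter_one {u : V} {g : ℕ} (hg : 4 ≤ g) (hmod : g % 6 = 4)
    (w : G.Walk u u) (hlw : w.length = g)
    (L : V → Finset ℕ) (c0 : ℕ) (hc0 : c0 = 1 ∨ c0 = 2)
    (hLu : L u = {1, 2})
    (hPL : ∀ i, 1 ≤ i → i ≤ g - 1 → L (w.getVert i) = {tR c0 (i-1), tR c0 i})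
    {i : ℕ} (hi : i < g) :
    (L (w.getVert i) ∩ L (w.getVert (i+1))).card = 1 := by
  have hg0 : w.getVert 0 = u := w.getVert_zero
  have hgg : w.getVert g = u := by rw [← hlw, w.getVert_length]
  rcases eq_or_ne i 0 with rfl | hi0
  · rw [hg0, hLu, hPL 1 le_rfl (by omega)]
    have e1 : tR c0 (1-1) = c0 := by simp [tR]
    have e2 : tR c0 1 = 3 := by simp [tR]
    rw [e1, e2]
    rcases hc0 with rfl | rfl <;> decide
  rcases eq_or_ne i (g-1) with rfl | hig
  · rw [show g - 1 + 1 = g by omega, hgg, hLu, hPL (g-1) (by omega) le_rfl]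
    have e1 : tR c0 (g-1-1) = 4 := by
      simp [tR, show (g-1-1) % 3 = 2 by omega]
    have e2 : tR c0 (g-1) = c0 := by
      simp [tR, show (g-1) % 3 = 0 by omega]
    rw [e1, e2]
    rcases hc0 with rfl | rfl <;> decide
  · rw [hPL i (by omega) (by omega), hPL (i+1) (by omega) (by omega),
      show i + 1 - 1 = i by omega]
    have hvals : (tR c0 (i-1) = 4 ∧ tR c0 i = c0 ∧ tR c0 (i+1) = 3) ∨
        (tR c0 (i-1) = c0 ∧ tR c0 i = 3 ∧ tR c0 (i+1) = 4) ∨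
        (tR c0 (i-1) = 3 ∧ tR c0 i = 4 ∧ tR c0 (i+1) = c0) := by
      have h3 : i % 3 = 0 ∨ i % 3 = 1 ∨ i % 3 = 2 := by omega
      rcases h3 with h3 | h3 | h3
      · exact Or.inl ⟨by simp [tR, show (i-1) % 3 = 2 by omega],
          by simp [tR, h3], by simp [tR, show (i+1) % 3 = 1 by omega]⟩
      · exact Or.inr (Or.inl ⟨by simp [tR, show (i-1) % 3 = 0 by omega],
          by simp [tR, h3], by simp [tR, show (i+1) % 3 = 2 by omega]⟩)
      · exact Or.inr (Or.inr ⟨by simp [tR, show (i-1) % 3 = 1 by omega],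
          by simp [tR, h3], by simp [tR, show (i+1) % 3 = 0 by omega]⟩)
    rcases hvals with ⟨e1, e2, e3⟩ | ⟨e1, e2, e3⟩ | ⟨e1, e2, e3⟩ <;>
      rw [e1, e2, e3] <;> apply pair_inter <;> rcases hc0 with rfl | rfl <;> omega

end ListAux

/-- For the graph consisting of two cycles of even length g ≥ 4 sharing exactly
one vertex, there is a 2-list assignment with no proper coloring; moreover if
g ≡ 4 (mod 6) the lists can be chosen so that adjacent lists intersect in exactly
one color. -/
theorem stmt_8 {V : Type} [Fintype V] (g : ℕ) (hg : 4 ≤ g) (hge : Even g)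
    (G : SimpleGraph V) (u : V) (c1 c2 : G.Walk u u)
    (h1 : c1.IsCycle) (h2 : c2.IsCycle)
    (hl1 : c1.length = g) (hl2 : c2.length = g)
    (hshare : ∀ v, v ∈ c1.support → v ∈ c2.support → v = u)
    (hedges : ∀ e, e ∈ G.edgeSet ↔ e ∈ c1.edges ∨ e ∈ c2.edges)
    (hverts : ∀ v : V, v ∈ c1.support ∨ v ∈ c2.support) :
    (∃ L : V → Finset ℕ, (∀ v, (L v).card = 2) ∧
      ¬∃ f : V → ℕ, (∀ v, f v ∈ L v) ∧ ∀ a b, G.Adj a b → f a ≠ f b) ∧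
    (g % 6 = 4 →
      ∃ L : V → Finset ℕ, (∀ v, (L v).card = 2) ∧
        (∀ a b, G.Adj a b → (L a ∩ L b).card = 1) ∧
        ¬∃ f : V → ℕ, (∀ v, f v ∈ L v) ∧ ∀ a b, G.Adj a b → f a ≠ f b) := by
  constructor
  · obtain ⟨L, hP0, hP1, hP2, hcard, hnc⟩ := ListAux.build hg c1 c2 h1 h2 hl1 hl2 hshare hverts
      (fun i => if i = 0 ∨ i = g - 1 then 1 else if i % 2 = 1 then 3 else 4)
      (fun i => if i = 0 ∨ i = g - 1 then 2 else if i % 2 = 1 then 5 else 6)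
      (by norm_num)
      (by intro i hi1 hi2; split_ifs <;> omega)
      (by intro i hi1 hi2; split_ifs <;> omega)
      (by simp) (by simp)
    exact ⟨L, hcard, hnc⟩
  · intro hmod
    obtain ⟨L, hP0, hP1, hP2, hcard, hnc⟩ := ListAux.build hg c1 c2 h1 h2 hl1 hl2 hshare hverts
      (ListAux.tR 1) (ListAux.tR 2)
      (by norm_num [ListAux.tR])
      (by intro i hi1 hi2; simp only [ListAux.tR]; split_ifs <;> omega)
      (by intro i hi1 hi2; simp only [ListAux.tR]; split_ifs <;> omega)
      (by simp [ListAux.tR, show (g-1) % 3 = 0 by omega])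
      (by simp [ListAux.tR, show (g-1) % 3 = 0 by omega])
    have hLu : L u = {1, 2} := by rw [hP0]; norm_num [ListAux.tR]
    refine ⟨L, hcard, ?_, hnc⟩
    intro a b hab
    have he := (hedges s(a,b)).mp ((G.mem_edgeSet).mpr hab)
    rcases he with he | he
    · obtain ⟨i, hi, hei⟩ := ListAux.edges_decomp c1 _ he
      have hx := ListAux.inter_one hg hmod c1 hl1 L 1 (Or.inl rfl) hLu hP1
        (i := i) (by omega)
      rcases Sym2.eq_iff.mp hei with ⟨ha, hb⟩ | ⟨ha, hb⟩
      · rw [ha, hb]; exact hx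
      · rw [ha, hb, Finset.inter_comm]; exact hx
    · obtain ⟨i, hi, hei⟩ := ListAux.edges_decomp c2 _ he
      have hx := ListAux.inter_one hg hmod c2 hl2 L 2 (Or.inr rfl) hLu hP2
        (i := i) (by omega)
      rcases Sym2.eq_iff.mp hei with ⟨ha, hb⟩ | ⟨ha, hb⟩
      · rw [ha, hb]; exact hx
      · rw [ha, hb, Finset.inter_comm]; exact hx
end

section
/- Every finite digraph with no directed odd cycle has a kernel. -/
variable {V : Type}

/-- A walk of length `n` from `a` to `b` along relation `R`. -/
def Wk (R : V → V → Prop) (a b : V) (n : ℕ) : Prop :=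
  ∃ f : ℕ → V, f 0 = a ∧ f n = b ∧ ∀ i < n, R (f i) (f (i + 1))

lemma Wk.refl (R : V → V → Prop) (a : V) : Wk R a a 0 :=
  ⟨fun _ => a, rfl, rfl, fun i hi => absurd hi (by omega)⟩

lemma Wk.single {R : V → V → Prop} {a b : V} (h : R a b) : Wk R a b 1 :=
  ⟨fun i => if i = 0 then a else b, by simp, by simp, by
    intro i hi
    have : i = 0 := by omega
    simpa [this] using h⟩

lemma Wk.trans {R : V → V → Prop} {a b c : V} {m n : ℕ}
    (h1 : Wk R a b m) (h2 : Wk R b c n) : Wk R a c (m + n) := by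
  obtain ⟨f, hf0, hfm, hf⟩ := h1
  obtain ⟨g, hg0, hgn, hg⟩ := h2
  refine ⟨fun i => if i < m then f i else g (i - m), ?_, ?_, ?_⟩
  · by_cases h : 0 < m
    · simp [h, hf0]
    · have hm : m = 0 := by omega
      subst hm
      simpa using hg0.trans (hf0 ▸ hfm.symm)
  · have : ¬ (m + n < m) := by omega
    simp [this, hgn]
  · intro i hi
    by_cases h1' : i + 1 < m
    · have : i < m := by omega
      simpa [this, h1'] using hf i (by omega)
    · by_cases h2' : i < m
      · have hm : i + 1 = m := by omega
        have hstep := hf i (by omega)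
        simp only [if_pos h2', if_neg h1']
        rw [show i + 1 - m = 0 from by omega, hg0, ← hfm, ← hm]
        exact hstep
      · have e : i + 1 - m = (i - m) + 1 := by omega
        simp only [if_neg h2', if_neg h1', e]
        exact hg (i - m) (by omega)

lemma Wk.mono {R R' : V → V → Prop} (h : ∀ a b, R a b → R' a b) {a b : V} {n : ℕ}
    (hw : Wk R a b n) : Wk R' a b n := by
  obtain ⟨f, h0, hn, hs⟩ := hw
  exact ⟨f, h0, hn, fun i hi => h _ _ (hs i hi)⟩

/-- No odd closed walk, given no odd (injective) cycle. -/
lemma no_odd_closed_walk {D : V → V → Prop}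
    (hodd : ¬ ∃ (n : ℕ) (_ : Odd n) (c : ZMod n → V),
      Function.Injective c ∧ ∀ i, D (c i) (c (i + 1))) :
    ∀ n, Odd n → ∀ v : V, ¬ Wk D v v n := by
  intro n
  induction n using Nat.strong_induction_on with
  | _ n ih =>
  intro hn v hw
  obtain ⟨f, hf0, hfn, hf⟩ := hw
  by_cases hdup : ∃ i j, i < j ∧ j ≤ n ∧ (i ≠ 0 ∨ j ≠ n) ∧ f i = f j
  · obtain ⟨i, j, hij, hjn, hne, hfe⟩ := hdup
    have hlt1 : j - i < n := by omega
    have hlt2 : n - (j - i) < n := by omega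
    have w1 : Wk D (f i) (f i) (j - i) := by
      refine ⟨fun k => f (i + k), by simp, ?_, ?_⟩
      · show f (i + (j - i)) = f i
        rw [show i + (j - i) = j from by omega, hfe]
      · intro k hk
        show D (f (i + k)) (f (i + (k + 1)))
        rw [show i + (k + 1) = i + k + 1 from by omega]
        exact hf (i + k) (by omega)
    have w2 : Wk D v v (n - (j - i)) := by
      refine ⟨fun k => if k ≤ i then f k else f (k + (j - i)), by simp [hf0], ?_, ?_⟩
      · show (if n - (j - i) ≤ i then f (n - (j - i)) else f (n - (j - i) + (j - i))) = v
        by_cases h : n - (j - i) ≤ i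
        · rw [if_pos h, show n - (j - i) = i from by omega, hfe,
            show j = n from by omega, hfn]
        · rw [if_neg h, show n - (j - i) + (j - i) = n from by omega, hfn]
      · intro k hk
        show D (if k ≤ i then f k else f (k + (j - i)))
          (if k + 1 ≤ i then f (k + 1) else f (k + 1 + (j - i)))
        by_cases h1 : k + 1 ≤ i
        · rw [if_pos h1, if_pos (by omega)]
          exact hf k (by omega)
        · by_cases h2 : k ≤ i
          · have hki : k = i := by omega
            have hjlt : j < n := by omega
            rw [if_pos h2, if_neg h1, hki, hfe,
              show i + 1 + (j - i) = j + 1 from by omega]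
            exact hf j (by omega)
          · rw [if_neg h2, if_neg h1,
              show k + 1 + (j - i) = k + (j - i) + 1 from by omega]
            exact hf (k + (j - i)) (by omega)
    rcases Nat.even_or_odd (j - i) with he | ho
    · exact ih _ hlt2 (Nat.Odd.sub_even (by omega) hn he) v w2
    · exact ih _ hlt1 ho (f i) w1
  · push_neg at hdup
    have hn1 : 1 ≤ n := hn.pos
    haveI : NeZero n := ⟨by omega⟩
    have hinj : ∀ i < n, ∀ j < n, f i = f j → i = j := by
      intro i hi j hj hfe
      by_contra hne
      rcases Nat.lt_or_ge i j with h | h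
      · exact hdup i j h (by omega) (Or.inr (by omega)) hfe
      · exact hdup j i (by omega) (by omega) (Or.inr (by omega)) hfe.symm
    refine hodd ⟨n, hn, fun i => f i.val, ?_, ?_⟩
    · intro i j hij
      have := hinj i.val (ZMod.val_lt i) j.val (ZMod.val_lt j) hij
      exact ZMod.val_injective n this
    · intro i
      show D (f i.val) (f (i + 1).val)
      rcases eq_or_lt_of_le hn1 with h1 | h1
      · have hne : n = 1 := h1.symm
        subst hne
        have h0 : ∀ j : ZMod 1, j.val = 0 := fun j => by
          have := ZMod.val_lt j; omega
        rw [h0 i, h0 (i + 1)]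
        have hstep := hf 0 (by omega)
        rwa [hfn, ← hf0] at hstep
      · have hval : (i + 1).val = (i.val + 1) % n := by
          rw [ZMod.val_add, ZMod.val_one_eq_one_mod, Nat.mod_eq_of_lt h1]
        by_cases h : i.val + 1 < n
        · rw [hval, Nat.mod_eq_of_lt h]
          exact hf i.val (by omega)
        · have he : i.val + 1 = n := by have := ZMod.val_lt i; omega
          rw [hval, he, Nat.mod_self, hf0, ← hfn]
          have hstep := hf i.val (by omega)
          rwa [he] at hstep

/-- In a minimal nonempty closed subset, every vertex reaches every vertex by
a walk staying inside the set. -/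
lemma walk_in_minimal_closed {D : V → V → Prop} {S C : Finset V}
    (hCS : C ⊆ S)
    (hclosed : ∀ a ∈ C, ∀ b ∈ S, D a b → b ∈ C)
    (hmin : ∀ T ⊆ S, T.Nonempty → (∀ a ∈ T, ∀ b ∈ S, D a b → b ∈ T) →
      C.card ≤ T.card) :
    ∀ u ∈ C, ∀ v ∈ C, ∃ n, Wk (fun a b => a ∈ C ∧ b ∈ C ∧ D a b) u v n := by
  classical
  intro u hu v hv
  set Rc : V → V → Prop := fun a b => a ∈ C ∧ b ∈ C ∧ D a b with hRc
  set T : Finset V := C.filter (fun w => ∃ n, Wk Rc u w n) with hT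
  have hTC : T ⊆ C := Finset.filter_subset _ _
  have hTu : u ∈ T := Finset.mem_filter.2 ⟨hu, 0, Wk.refl Rc u⟩
  have hTclosed : ∀ a ∈ T, ∀ b ∈ S, D a b → b ∈ T := by
    intro a ha b hb hab
    obtain ⟨haC, n, hw⟩ := Finset.mem_filter.1 ha
    have hbC : b ∈ C := hclosed a haC b hb hab
    exact Finset.mem_filter.2 ⟨hbC, n + 1, hw.trans (Wk.single ⟨haC, hbC, hab⟩)⟩
  have : C.card ≤ T.card := hmin T (hTC.trans hCS) ⟨u, hTu⟩ hTclosed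
  have hTeq : T = C := Finset.eq_of_subset_of_card_le hTC this
  have := hTeq ▸ hv
  exact (Finset.mem_filter.1 this).2

/-- A strongly connected, odd-closed-walk-free piece has a kernel. -/
lemma kernel_of_scc {D : V → V → Prop} {C : Finset V}
    (hD : ∀ n, Odd n → ∀ v : V, ¬ Wk D v v n)
    (hCne : C.Nonempty)
    (hconn : ∀ u ∈ C, ∀ v ∈ C, ∃ n, Wk (fun a b => a ∈ C ∧ b ∈ C ∧ D a b) u v n) :
    ∃ K : Finset V, K ⊆ C ∧ (∀ a ∈ K, ∀ b ∈ K, ¬ D a b) ∧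
      ∀ v ∈ C, v ∉ K → ∃ w ∈ K, D v w := by
  classical
  set Rc : V → V → Prop := fun a b => a ∈ C ∧ b ∈ C ∧ D a b with hRc
  have hmono : ∀ a b, Rc a b → D a b := fun a b h => h.2.2
  obtain ⟨v0, hv0⟩ := hCne
  -- parity uniqueness
  have hpar : ∀ u ∈ C, ∀ m m', Wk Rc v0 u m → Wk Rc v0 u m' → (Even m ↔ Even m') := by
    intro u hu m m' hm hm'
    by_contra hiff
    obtain ⟨k, hk⟩ := hconn u hu v0 hv0
    have w1 : Wk D v0 v0 (m + k) := (hm.trans hk).mono hmono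
    have w2 : Wk D v0 v0 (m' + k) := (hm'.trans hk).mono hmono
    have h1 := Nat.even_add (m := m) (n := k)
    have h2 := Nat.even_add (m := m') (n := k)
    rcases Nat.even_or_odd (m + k) with he | ho
    · rcases Nat.even_or_odd (m' + k) with he' | ho'
      · exact hiff ((h1.1 he).trans (h2.1 he').symm)
      · exact hD _ ho' v0 w2
    · exact hD _ ho v0 w1
  set K : Finset V := C.filter (fun u => ∃ n, Even n ∧ Wk Rc v0 u n) with hK
  have hKC : K ⊆ C := Finset.filter_subset _ _
  have hv0K : v0 ∈ K := Finset.mem_filter.2 ⟨hv0, 0, Even.zero, Wk.refl Rc v0⟩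
  refine ⟨K, hKC, ?_, ?_⟩
  · intro a ha b hb hab
    obtain ⟨haC, m, hmeven, hm⟩ := Finset.mem_filter.1 ha
    obtain ⟨hbC, m', hm'even, hm'⟩ := Finset.mem_filter.1 hb
    have hw : Wk Rc v0 b (m + 1) := hm.trans (Wk.single ⟨haC, hbC, hab⟩)
    have hpp := hpar b hbC (m + 1) m' hw hm'
    exact (Nat.even_add_one.mp (hpp.2 hm'even)) hmeven
  · intro v hvC hvK
    obtain ⟨m, hm⟩ := hconn v0 hv0 v hvC
    have hmodd : Odd m := by
      by_contra h
      exact hvK (Finset.mem_filter.2 ⟨hvC, m, Nat.not_odd_iff_even.1 h, hm⟩)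
    obtain ⟨k, hk⟩ := hconn v hvC v0 hv0
    have hkpos : 0 < k := by
      rcases Nat.eq_zero_or_pos k with h | h
      · subst h
        obtain ⟨g, hg0, hgk, _⟩ := hk
        exact absurd (Finset.mem_filter.2 ⟨hvC, 0, Even.zero,
          (hg0 ▸ hgk : v = v0) ▸ Wk.refl Rc v0⟩) hvK
      · exact h
    obtain ⟨g, hg0, hgk, hgs⟩ := hk
    have hstep := hgs 0 hkpos
    rw [hg0] at hstep
    obtain ⟨hvC', hwC, hvw⟩ := hstep
    refine ⟨g 1, ?_, hvw⟩
    have hw : Wk Rc v0 (g 1) (m + 1) := hm.trans (Wk.single ⟨hvC, hwC, hvw⟩)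
    exact Finset.mem_filter.2 ⟨hwC, m + 1, by simpa [Nat.even_add_one, Nat.not_even_iff_odd], hw⟩

lemma kernel_exists {D : V → V → Prop}
    (hD : ∀ n, Odd n → ∀ v : V, ¬ Wk D v v n) :
    ∀ S : Finset V, ∃ K : Finset V, K ⊆ S ∧ (∀ a ∈ K, ∀ b ∈ K, ¬ D a b) ∧
      ∀ v ∈ S, v ∉ K → ∃ w ∈ K, D v w := by
  classical
  intro S
  induction S using Finset.strongInduction with
  | _ S ih =>
  rcases S.eq_empty_or_nonempty with hS | hS
  · exact ⟨∅, by simp [hS]⟩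
  · -- find a minimal nonempty closed subset of S
    set P : Finset (Finset V) := S.powerset.filter
      (fun T => T.Nonempty ∧ ∀ a ∈ T, ∀ b ∈ S, D a b → b ∈ T) with hP
    have hSP : S ∈ P := Finset.mem_filter.2
      ⟨Finset.mem_powerset.2 (le_refl S), hS, fun a _ b hb _ => hb⟩
    obtain ⟨C, hCP, hCmin⟩ := P.exists_min_image Finset.card ⟨S, hSP⟩
    obtain ⟨hCpow, hCne, hCclosed⟩ := Finset.mem_filter.1 hCP
    have hCS : C ⊆ S := Finset.mem_powerset.1 hCpow
    have hmin : ∀ T ⊆ S, T.Nonempty → (∀ a ∈ T, ∀ b ∈ S, D a b → b ∈ T) →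
        C.card ≤ T.card := by
      intro T hTS hTne hTcl
      exact hCmin T (Finset.mem_filter.2 ⟨Finset.mem_powerset.2 hTS, hTne, hTcl⟩)
    have hconn := walk_in_minimal_closed hCS hCclosed hmin
    obtain ⟨KC, hKCC, hKCind, hKCdom⟩ := kernel_of_scc hD hCne hconn
    set N : Finset V := S.filter (fun v => ∃ w ∈ KC, D v w) with hN
    set R : Finset V := S \ (C ∪ N) with hR
    have hRS : R ⊂ S := by
      obtain ⟨c, hc⟩ := hCne
      refine Finset.ssubset_iff_of_subset (Finset.sdiff_subset) |>.2 ⟨c, hCS hc, ?_⟩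
      simp [hR, hc, hCS hc]
    obtain ⟨K', hK'R, hK'ind, hK'dom⟩ := ih R hRS
    have hK'S : K' ⊆ R := hK'R
    refine ⟨KC ∪ K', ?_, ?_, ?_⟩
    · intro x hx
      rcases Finset.mem_union.1 hx with h | h
      · exact hCS (hKCC h)
      · exact (Finset.sdiff_subset) (hK'R h)
    · intro a ha b hb hab
      rcases Finset.mem_union.1 ha with haK | haK <;>
        rcases Finset.mem_union.1 hb with hbK | hbK
      · exact hKCind a haK b hbK hab
      · -- a ∈ KC ⊆ C, b ∈ K' ⊆ R, but C is closed so b ∈ C, contradiction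
        have hbS : b ∈ S := Finset.sdiff_subset (hK'R hbK)
        have hbC : b ∈ C := hCclosed a (hKCC haK) b hbS hab
        have := hK'R hbK
        rw [hR] at this
        simp [Finset.mem_sdiff, hbC] at this
      · -- a ∈ K' ⊆ R so a ∉ N, but D a b with b ∈ KC puts a ∈ N
        have haR := hK'R haK
        rw [hR] at haR
        obtain ⟨haS, hnot⟩ := Finset.mem_sdiff.1 haR
        exact hnot (Finset.mem_union_right _ (Finset.mem_filter.2 ⟨haS, b, hbK, hab⟩))
      · exact hK'ind a haK b hbK hab
    · intro v hvS hvK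
      have hvKC : v ∉ KC := fun h => hvK (Finset.mem_union_left _ h)
      have hvK' : v ∉ K' := fun h => hvK (Finset.mem_union_right _ h)
      by_cases hvC : v ∈ C
      · obtain ⟨w, hw, hvw⟩ := hKCdom v hvC hvKC
        exact ⟨w, Finset.mem_union_left _ hw, hvw⟩
      · by_cases hvN : v ∈ N
        · obtain ⟨_, w, hw, hvw⟩ := Finset.mem_filter.1 hvN
          exact ⟨w, Finset.mem_union_left _ hw, hvw⟩
        · have hvR : v ∈ R := by
            rw [hR]; simp [hvS, hvC, hvN]
          obtain ⟨w, hw, hvw⟩ := hK'dom v hvR hvK'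
          exact ⟨w, Finset.mem_union_right _ hw, hvw⟩

/-- Richardson's theorem (odd-cycle-free case): every finite digraph with no
directed odd cycle has a kernel. -/
theorem stmt_13 {V : Type} [Fintype V] (D : V → V → Prop)
    (hodd : ¬ ∃ (n : ℕ) (_ : Odd n) (c : ZMod n → V),
      Function.Injective c ∧ ∀ i, D (c i) (c (i + 1))) :
    ∃ K : Set V, (∀ a ∈ K, ∀ b ∈ K, ¬ D a b) ∧ ∀ v, v ∉ K → ∃ w ∈ K, D v w := by
  have hD := no_odd_closed_walk hodd
  obtain ⟨K, _, hind, hdom⟩ := kernel_exists hD (Finset.univ : Finset V)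
  refine ⟨(K : Set V), ?_, ?_⟩
  · intro a ha b hb
    exact hind a ha b hb
  · intro v hv
    obtain ⟨w, hw, hvw⟩ := hdom v (Finset.mem_univ v) (by simpa using hv)
    exact ⟨w, by simpa using hw, hvw⟩
end
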